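/- arXiv:1007.3652 — 3 statements merged into one kernel-verified Lean document; each statement's English description precedes it below -/
import Mathlib

section
/- Let X be a reflexive Banach space and S : X ⇉ X* maximal monotone. Then S is surjective (R(S) = X*) if and only if for every p* ∈ X* there exists a representative function f_S ∈ F_S such that the function y* ↦ −(f_S*(y*, ·))*(p*) is lower semicontinuous at p* and there exists x ∈ X with p* ∈ ∂(f_S*(p*, ·))(x). -/
noncomputable section

open scoped Topology Pointwise

variable {X : Type*} [NormedAddCommGroup X] [NormedSpace ℝ X]

/-- The topological dual of a real normed space. -/
abbrev Dd (X : Type*) [NormedAddCommGroup X] [NormedSpace ℝ X] := StrongDual ℝ X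

/-- Convexity for extended-real-valued functions. -/
def EConvexOn {E : Type*} [AddCommMonoid E] [Module ℝ E] (f : E → EReal) : Prop :=
  ∀ x y : E, ∀ a b : ℝ, 0 ≤ a → 0 ≤ b → a + b = 1 →
    f (a • x + b • y) ≤ (a : EReal) * f x + (b : EReal) * f y

/-- Monotonicity of a multivalued operator `T : X ⇉ X*`. -/
def IsMonotoneOp (T : X → Set (Dd X)) : Prop :=
  ∀ ⦃x y xs ys⦄, xs ∈ T x → ys ∈ T y → 0 ≤ (ys - xs) (y - x)

/-- Maximal monotonicity of a multivalued operator `T : X ⇉ X*`. -/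
def IsMaxMonotone (T : X → Set (Dd X)) : Prop :=
  IsMonotoneOp T ∧ ∀ x xs, (∀ y ys, ys ∈ T y → 0 ≤ (xs - ys) (x - y)) → xs ∈ T x

/-- Fenchel conjugate of a function on `X × X*`, evaluated on `X* × X`
(the space `X` identified with its image in `X**`). -/
def conj2 (F : X × Dd X → EReal) : Dd X × X → EReal :=
  fun p => ⨆ q : X × Dd X, ((p.1 q.1 + q.2 p.2 : ℝ) : EReal) - F q

/-- Fenchel conjugate of a function on `X`. -/
def conj1 (f : X → EReal) : Dd X → EReal :=
  fun xs => ⨆ x : X, ((xs x : ℝ) : EReal) - f x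

/-- `F` is a representative function of `T`: convex, lower semicontinuous,
everywhere above the duality product and coinciding with it on the graph of `T`. -/
def IsRepr (T : X → Set (Dd X)) (F : X × Dd X → EReal) : Prop :=
  EConvexOn F ∧ LowerSemicontinuous F ∧
  (∀ p : X × Dd X, ((p.2 p.1 : ℝ) : EReal) ≤ F p) ∧
  (∀ p : X × Dd X, p.2 ∈ T p.1 → F p = ((p.2 p.1 : ℝ) : EReal))

/-- `f̂(x, x*) = f(x, -x*)`. -/
def hatF (F : X × Dd X → EReal) : X × Dd X → EReal := fun p => F (p.1, -p.2)

/-- Effective domain. -/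
def edom {E : Type*} (F : E → EReal) : Set E := {p | F p ≠ ⊤}

/-- Infimal convolution. -/
def infConv {E : Type*} [AddCommGroup E] (g h : E → EReal) : E → EReal :=
  fun y => ⨅ u : E, g (y - u) + h u

/-- Exactness of the infimal convolution at a point. -/
def ExactAt {E : Type*} [AddCommGroup E] (g h : E → EReal) (y : E) : Prop :=
  ∃ u : E, infConv g h y = g (y - u) + h u

/-- Convex subdifferential of an extended-real-valued function (empty where the
value is not finite). -/
def esubdiff (h : X → EReal) (x : X) : Set (Dd X) :=
  {xs | h x ≠ ⊤ ∧ h x ≠ ⊥ ∧ ∀ y, h x + ((xs (y - x) : ℝ) : EReal) ≤ h y}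

/-- Reflexivity of a normed space. -/
def Reflexive' (X : Type*) [NormedAddCommGroup X] [NormedSpace ℝ X] : Prop :=
  Function.Surjective (NormedSpace.inclusionInDoubleDual ℝ X)

/-- The Fitzpatrick function of `T`. -/
def fitz (T : X → Set (Dd X)) : X × Dd X → EReal :=
  fun p => ⨆ q : {q : X × Dd X // q.2 ∈ T q.1},
    ((q.1.2 p.1 + p.2 q.1.1 - q.1.2 q.1.1 : ℝ) : EReal)

/-! ### EReal helper lemmas -/

lemma ereal_sub_le_coe {r m : ℝ} {b : EReal} (h : (m : EReal) ≤ b) :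
    (r : EReal) - b ≤ ((r - m : ℝ) : EReal) := by
  induction b with
  | bot => simp at h
  | coe b =>
      rw [← EReal.coe_sub, EReal.coe_le_coe_iff]
      have := EReal.coe_le_coe_iff.mp h; linarith
  | top => simp

lemma ereal_coe_le_sub {r m : ℝ} {b : EReal} (h : b ≤ (m : EReal)) :
    ((r - m : ℝ) : EReal) ≤ (r : EReal) - b := by
  induction b with
  | bot => simp
  | coe b =>
      rw [← EReal.coe_sub, EReal.coe_le_coe_iff]
      have := EReal.coe_le_coe_iff.mp h; linarith
  | top => simp at h

lemma ereal_lt_sub {m r : ℝ} {b : EReal} (h : (m : EReal) < (r : EReal) - b) :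
    b < ((r - m : ℝ) : EReal) := by
  induction b with
  | bot => exact bot_lt_iff_ne_bot.2 (EReal.coe_ne_bot _)
  | coe b =>
      rw [← EReal.coe_sub, EReal.coe_lt_coe_iff] at h
      rw [EReal.coe_lt_coe_iff]; linarith
  | top => simp at h

lemma ereal_comb {a b r s : ℝ} (ha : 0 ≤ a) (hb : 0 ≤ b) {P Q : EReal}
    (hP : (r : EReal) ≤ P) (hQ : (s : EReal) ≤ Q) :
    ((a * r + b * s : ℝ) : EReal) ≤ (a : EReal) * P + (b : EReal) * Q := by
  rw [EReal.coe_add, EReal.coe_mul, EReal.coe_mul]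
  exact add_le_add (mul_le_mul_of_nonneg_left hP (by exact_mod_cast ha))
    (mul_le_mul_of_nonneg_left hQ (by exact_mod_cast hb))

lemma ereal_comb' {a b r s : ℝ} (ha : 0 ≤ a) (hb : 0 ≤ b) {P Q : EReal}
    (hP : P ≤ (r : EReal)) (hQ : Q ≤ (s : EReal)) :
    (a : EReal) * P + (b : EReal) * Q ≤ ((a * r + b * s : ℝ) : EReal) := by
  rw [EReal.coe_add, EReal.coe_mul, EReal.coe_mul]
  exact add_le_add (mul_le_mul_of_nonneg_left hP (by exact_mod_cast ha))
    (mul_le_mul_of_nonneg_left hQ (by exact_mod_cast hb))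

lemma ereal_coe_le_of_forall {c : ℝ} {z : EReal}
    (h : ∀ δ : ℝ, 0 < δ → ((c - δ : ℝ) : EReal) ≤ z) : (c : EReal) ≤ z := by
  induction z with
  | bot => exact absurd (le_bot_iff.mp (h 1 one_pos)) (EReal.coe_ne_bot _)
  | coe z =>
      rw [EReal.coe_le_coe_iff]
      by_contra hc
      push_neg at hc
      have := EReal.coe_le_coe_iff.mp (h ((c - z) / 2) (by linarith))
      linarith
  | top => exact le_top

/-! ### representative functions dominate graph-affine functions -/

lemma repr_ge_graph {S : X → Set (Dd X)} {F : X × Dd X → EReal} (hF : IsRepr S F)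
    {y : X} {ys : Dd X} (hys : ys ∈ S y) (q : X × Dd X) :
    ((ys q.1 + q.2 y - ys y : ℝ) : EReal) ≤ F q := by
  rcases eq_top_or_lt_top (F q) with htop | htop
  · rw [htop]; exact le_top
  have hbot : ((q.2 q.1 : ℝ) : EReal) ≤ F q := hF.2.2.1 q
  have hne_bot : F q ≠ ⊥ := fun h => by simp [h] at hbot
  obtain ⟨r, hr⟩ : ∃ r : ℝ, F q = (r : EReal) :=
    ⟨(F q).toReal, (EReal.coe_toReal htop.ne hne_bot).symm⟩
  set a := q.2 q.1 with ha
  set b := ys q.1 + q.2 y with hb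
  set c := ys y with hc
  have key : ∀ t ∈ Set.Ioo (0:ℝ) 1, (1-t)*(b - c) ≤ r - t*a := by
    intro t ht
    have hconv := hF.1 q (y, ys) t (1-t) (le_of_lt ht.1) (by linarith [ht.2]) (by ring)
    have hgr : F (y, ys) = ((ys y : ℝ) : EReal) := hF.2.2.2 (y, ys) hys
    have hpi := hF.2.2.1 (t • q + (1-t) • (y, ys))
    have hval : (((t • q + (1-t) • (y, ys)).2 ((t • q + (1-t) • (y, ys)).1) : ℝ))
        = t*t*a + t*(1-t)*b + (1-t)*(1-t)*c := by
      simp only [Prod.smul_fst, Prod.smul_snd, Prod.fst_add, Prod.snd_add,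
        ContinuousLinearMap.add_apply, ContinuousLinearMap.smul_apply, map_add, map_smul,
        smul_eq_mul, ha, hb, hc]
      ring
    have h1 : ((t*t*a + t*(1-t)*b + (1-t)*(1-t)*c : ℝ) : EReal)
        ≤ ((t*r + (1-t)*c : ℝ) : EReal) := by
      calc ((t*t*a + t*(1-t)*b + (1-t)*(1-t)*c : ℝ) : EReal)
          = (((t • q + (1-t) • (y, ys)).2 ((t • q + (1-t) • (y, ys)).1) : ℝ) : EReal) := by
            rw [hval]
        _ ≤ F (t • q + (1-t) • (y, ys)) := hpi
        _ ≤ (t : EReal) * F q + ((1-t : ℝ) : EReal) * F (y, ys) := hconv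
        _ = ((t*r + (1-t)*c : ℝ) : EReal) := by
            rw [hr, hgr, ← hc, ← EReal.coe_mul, ← EReal.coe_mul, ← EReal.coe_add]
    have hreal := EReal.coe_le_coe_iff.mp h1
    have h2 : t * ((1-t)*(b-c)) ≤ t * (r - t*a) := by nlinarith [hreal]
    exact le_of_mul_le_mul_left h2 ht.1
  rw [hr, EReal.coe_le_coe_iff]
  have hlim1 : Filter.Tendsto (fun t : ℝ => (1-t)*(b-c)) (𝓝[>] (0:ℝ)) (𝓝 (b-c)) := by
    have hcont : Continuous (fun t : ℝ => (1-t)*(b-c)) := by fun_prop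
    have h := hcont.tendsto (0:ℝ)
    simp only [sub_zero, one_mul] at h
    exact h.mono_left nhdsWithin_le_nhds
  have hlim2 : Filter.Tendsto (fun t : ℝ => r - t*a) (𝓝[>] (0:ℝ)) (𝓝 r) := by
    have hcont : Continuous (fun t : ℝ => r - t*a) := by fun_prop
    have h := hcont.tendsto (0:ℝ)
    simp only [zero_mul, sub_zero] at h
    exact h.mono_left nhdsWithin_le_nhds
  have hev : ∀ᶠ t in 𝓝[>] (0:ℝ), (1-t)*(b-c) ≤ r - t*a :=
    Filter.eventually_of_mem (Ioo_mem_nhdsGT_of_mem (by constructor <;> norm_num)) key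
  exact le_of_tendsto_of_tendsto hlim1 hlim2 hev

lemma graph_nonempty {S : X → Set (Dd X)} (hS : IsMaxMonotone S) :
    ∃ q : X × Dd X, q.2 ∈ S q.1 := by
  by_contra h
  push_neg at h
  exact h (0, 0) (hS.2 0 0 (fun y ys hys => absurd hys (h (y, ys))))

lemma fitz_repr {S : X → Set (Dd X)} (hS : IsMaxMonotone S) : IsRepr S (fitz S) := by
  have hge : ∀ p : X × Dd X, ((p.2 p.1 : ℝ) : EReal) ≤ fitz S p := by
    intro p
    by_cases hmem : p.2 ∈ S p.1
    · have := le_iSup (fun q : {q : X × Dd X // q.2 ∈ S q.1} =>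
        ((q.1.2 p.1 + p.2 q.1.1 - q.1.2 q.1.1 : ℝ) : EReal)) ⟨p, hmem⟩
      refine le_trans (le_of_eq ?_) this
      norm_num
    · have hex : ∃ y ys, ys ∈ S y ∧ (p.2 - ys) (p.1 - y) < 0 := by
        by_contra hno
        push_neg at hno
        exact hmem (hS.2 p.1 p.2 hno)
      obtain ⟨y, ys, hys, hlt⟩ := hex
      have := le_iSup (fun q : {q : X × Dd X // q.2 ∈ S q.1} =>
        ((q.1.2 p.1 + p.2 q.1.1 - q.1.2 q.1.1 : ℝ) : EReal)) ⟨(y, ys), hys⟩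
      refine le_trans ?_ this
      rw [EReal.coe_le_coe_iff]
      simp only [ContinuousLinearMap.sub_apply, map_sub] at hlt
      linarith
  refine ⟨?_, ?_, hge, ?_⟩
  · intro x y a b ha hb hab
    apply iSup_le
    intro q
    have hterm : (q.1.2 (a•x+b•y).1 + (a•x+b•y).2 q.1.1 - q.1.2 q.1.1 : ℝ)
        = a * (q.1.2 x.1 + x.2 q.1.1 - q.1.2 q.1.1)
          + b * (q.1.2 y.1 + y.2 q.1.1 - q.1.2 q.1.1) := by
      have hb' : b = 1 - a := by linarith
      subst hb'
      simp only [Prod.smul_fst, Prod.smul_snd, Prod.fst_add, Prod.snd_add, map_add, map_smul,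
        smul_eq_mul, ContinuousLinearMap.add_apply, ContinuousLinearMap.smul_apply]
      ring
    rw [hterm]
    exact ereal_comb ha hb
      (le_iSup (fun q' : {q : X × Dd X // q.2 ∈ S q.1} =>
        ((q'.1.2 x.1 + x.2 q'.1.1 - q'.1.2 q'.1.1 : ℝ) : EReal)) q)
      (le_iSup (fun q' : {q : X × Dd X // q.2 ∈ S q.1} =>
        ((q'.1.2 y.1 + y.2 q'.1.1 - q'.1.2 q'.1.1 : ℝ) : EReal)) q)
  · apply lowerSemicontinuous_iSup
    intro q
    apply Continuous.lowerSemicontinuous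
    apply continuous_coe_real_ereal.comp
    have h1 : Continuous (fun p : X × Dd X => q.1.2 p.1) := q.1.2.continuous.comp continuous_fst
    have h2 : Continuous (fun p : X × Dd X => p.2 q.1.1) :=
      (ContinuousLinearMap.apply ℝ ℝ q.1.1).continuous.comp continuous_snd
    exact (h1.add h2).sub continuous_const
  · intro p hp
    refine le_antisymm (iSup_le ?_) (hge p)
    rintro ⟨q, hq⟩
    rw [EReal.coe_le_coe_iff]
    have := hS.1 hq hp
    simp only [ContinuousLinearMap.sub_apply, map_sub] at this
    linarith

lemma forward_dir {S : X → Set (Dd X)} (hS : IsMaxMonotone S) {ps : Dd X} {x₀ : X}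
    (hx₀ : ps ∈ S x₀) :
    IsRepr S (fitz S) ∧
      LowerSemicontinuousAt
        (fun ys : Dd X => -(⨆ x : X, ((ps x : ℝ) : EReal) - conj2 (fitz S) (ys, x))) ps ∧
      ∃ x : X, (conj2 (fitz S) (ps, x) ≠ ⊤ ∧ conj2 (fitz S) (ps, x) ≠ ⊥ ∧
        ∀ y, conj2 (fitz S) (ps, x) + ((ps (y - x) : ℝ) : EReal) ≤ conj2 (fitz S) (ps, y)) := by
  have hF := fitz_repr hS
  have f1 : fitz S (x₀, ps) = ((ps x₀ : ℝ) : EReal) := hF.2.2.2 (x₀, ps) hx₀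
  have f2 : ∀ (ys : Dd X) (x : X),
      ((ys x₀ + ps x - ps x₀ : ℝ) : EReal) ≤ conj2 (fitz S) (ys, x) := by
    intro ys x
    have h := le_iSup (fun q : X × Dd X =>
      ((ys q.1 + q.2 x : ℝ) : EReal) - fitz S q) (x₀, ps)
    simp only [f1] at h
    rw [← EReal.coe_sub] at h
    exact h
  have f3 : conj2 (fitz S) (ps, x₀) = ((ps x₀ : ℝ) : EReal) := by
    refine le_antisymm (iSup_le ?_) ?_
    · intro q
      have hm : ((ps q.1 + q.2 x₀ - ps x₀ : ℝ) : EReal) ≤ fitz S q :=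
        le_iSup (fun q' : {q : X × Dd X // q.2 ∈ S q.1} =>
          ((q'.1.2 q.1 + q.2 q'.1.1 - q'.1.2 q'.1.1 : ℝ) : EReal)) ⟨(x₀, ps), hx₀⟩
      have := ereal_sub_le_coe (r := ps q.1 + q.2 x₀) hm
      convert this using 2
      ring
    · have := f2 ps x₀
      convert this using 2
      ring
  refine ⟨hF, ?_, ⟨x₀, ?_, ?_, ?_⟩⟩
  · -- lower semicontinuity at ps
    have hsup_le : ∀ ys : Dd X,
        (⨆ x : X, ((ps x : ℝ) : EReal) - conj2 (fitz S) (ys, x)) ≤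
          ((ps x₀ - ys x₀ : ℝ) : EReal) := by
      intro ys
      apply iSup_le
      intro x
      have := ereal_sub_le_coe (r := ps x) (f2 ys x)
      convert this using 2
      ring
    have hlow : ∀ ys : Dd X, ((ys x₀ - ps x₀ : ℝ) : EReal) ≤
        -(⨆ x : X, ((ps x : ℝ) : EReal) - conj2 (fitz S) (ys, x)) := by
      intro ys
      have h := EReal.neg_le_neg_iff.2 (hsup_le ys)
      rw [← EReal.coe_neg] at h
      convert h using 2
      ring
    have hps : -(⨆ x : X, ((ps x : ℝ) : EReal) - conj2 (fitz S) (ps, x)) ≤ 0 := by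
      have h0 : (0 : EReal) ≤ (⨆ x : X, ((ps x : ℝ) : EReal) - conj2 (fitz S) (ps, x)) := by
        have := le_iSup (fun x : X => ((ps x : ℝ) : EReal) - conj2 (fitz S) (ps, x)) x₀
        rw [f3, ← EReal.coe_sub] at this
        simpa using this
      have := EReal.neg_le_neg_iff.2 h0
      simpa using this
    intro y' hy'
    have hy0 : y' < 0 := lt_of_lt_of_le hy' hps
    induction y' with
    | bot =>
        exact Filter.Eventually.of_forall fun ys =>
          lt_of_lt_of_le (EReal.bot_lt_coe _) (hlow ys)
    | coe y' =>
        have hy0' : y' < 0 := by exact_mod_cast hy0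
        have hcont : Continuous (fun ys : Dd X => ys x₀ - ps x₀) :=
          ((ContinuousLinearMap.apply ℝ ℝ x₀).continuous).sub continuous_const
        have htend : Filter.Tendsto (fun ys : Dd X => ys x₀ - ps x₀) (𝓝 ps) (𝓝 0) := by
          have := hcont.tendsto ps
          simpa using this
        have hev := htend.eventually_const_lt hy0'
        exact hev.mono fun ys h =>
          lt_of_lt_of_le (EReal.coe_lt_coe_iff.2 h) (hlow ys)
    | top => exact absurd hy0 (by simp)
  · rw [f3]; exact EReal.coe_ne_top _
  · rw [f3]; exact EReal.coe_ne_bot _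
  · intro y
    rw [f3]
    have heq : ((ps x₀ : ℝ) : EReal) + ((ps (y - x₀) : ℝ) : EReal)
        = ((ps x₀ + ps y - ps x₀ : ℝ) : EReal) := by
      rw [← EReal.coe_add]
      norm_cast
      rw [map_sub]
      ring
    rw [heq]
    exact f2 ps y

lemma real_contra {c A B D E : ℝ} (hcpos : 0 < -c)
    (h5 : -c * D + (E - B) * c < -c * A) (hcon : A - D - (B - E) < 0) : False := by
  nlinarith

lemma backward_dir {S : X → Set (Dd X)}
    (hX : Function.Surjective (NormedSpace.inclusionInDoubleDual ℝ X))
    (hS : IsMaxMonotone S) {ps : Dd X} {F : X × Dd X → EReal} (hF : IsRepr S F)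
    (hlsc : LowerSemicontinuousAt
      (fun ys : Dd X => -(⨆ x : X, ((ps x : ℝ) : EReal) - conj2 F (ys, x))) ps)
    {x₀ : X}
    (hne_top : conj2 F (ps, x₀) ≠ ⊤) (hne_bot : conj2 F (ps, x₀) ≠ ⊥)
    (hsub : ∀ y, conj2 F (ps, x₀) + ((ps (y - x₀) : ℝ) : EReal) ≤ conj2 F (ps, y)) :
    ∃ x, ps ∈ S x := by
  obtain ⟨γ, hγ⟩ : ∃ γ : ℝ, conj2 F (ps, x₀) = (γ : EReal) :=
    ⟨(conj2 F (ps, x₀)).toReal, (EReal.coe_toReal hne_top hne_bot).symm⟩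
  set α : ℝ := γ - ps x₀ with hα_def
  -- the marginal sup function
  set Phi : Dd X → EReal := fun ys => ⨆ x : X, ((ps x : ℝ) : EReal) - conj2 F (ys, x)
    with hPhi_def
  have hΦps : Phi ps = ((-α : ℝ) : EReal) := by
    refine le_antisymm (iSup_le ?_) ?_
    · intro x
      have hm : ((γ + (ps x - ps x₀) : ℝ) : EReal) ≤ conj2 F (ps, x) := by
        have h := hsub x
        rw [hγ, map_sub, ← EReal.coe_add] at h
        exact h
      have := ereal_sub_le_coe (r := ps x) hm
      refine le_trans this (le_of_eq ?_)
      norm_cast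
      ring
    · have h := le_iSup (fun x : X => ((ps x : ℝ) : EReal) - conj2 F (ps, x)) x₀
      rw [hγ, ← EReal.coe_sub] at h
      refine le_trans (le_of_eq ?_) h
      norm_cast
      ring
  by_cases hα : α ≤ 0
  · -- p* ∈ S x₀
    refine ⟨x₀, hS.2 x₀ ps ?_⟩
    intro y ys hys
    have h : ((ps y + ys x₀ : ℝ) : EReal) - F (y, ys) ≤ conj2 F (ps, x₀) :=
      le_iSup (fun q : X × Dd X => ((ps q.1 + q.2 x₀ : ℝ) : EReal) - F q) (y, ys)
    rw [hF.2.2.2 (y, ys) hys, ← EReal.coe_sub, hγ, EReal.coe_le_coe_iff] at h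
    simp only [ContinuousLinearMap.sub_apply, map_sub]
    have hγle : γ ≤ ps x₀ := by linarith [hα]
    linarith
  · push_neg at hα
    -- the epigraph of the negative of Phi
    set C : Set (Dd X × ℝ) := {p | ((-p.2 : ℝ) : EReal) ≤ Phi p.1} with hC_def
    have hGconv : ∀ (a b : ℝ), 0 ≤ a → 0 ≤ b → a + b = 1 →
        ∀ (ys1 ys2 : Dd X) (x1 x2 : X),
        conj2 F (a • ys1 + b • ys2, a • x1 + b • x2) ≤
          (a : EReal) * conj2 F (ys1, x1) + (b : EReal) * conj2 F (ys2, x2) := by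
      intro a b ha hb hab ys1 ys2 x1 x2
      apply iSup_le
      intro q
      rcases eq_top_or_lt_top (F q) with htop | htop
      · rw [htop]
        refine le_trans (le_of_eq ?_) (le_trans bot_le (le_refl _))
        simp
      · have hFbot : ((q.2 q.1 : ℝ) : EReal) ≤ F q := hF.2.2.1 q
        have hFne_bot : F q ≠ ⊥ := fun h => by simp [h] at hFbot
        obtain ⟨r, hr⟩ : ∃ r : ℝ, F q = (r : EReal) :=
          ⟨(F q).toReal, (EReal.coe_toReal htop.ne hFne_bot).symm⟩
        have hP : ((ys1 q.1 + q.2 x1 - r : ℝ) : EReal) ≤ conj2 F (ys1, x1) := by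
          have h := le_iSup (fun q' : X × Dd X =>
            ((ys1 q'.1 + q'.2 x1 : ℝ) : EReal) - F q') q
          rw [hr, ← EReal.coe_sub] at h
          exact h
        have hQ : ((ys2 q.1 + q.2 x2 - r : ℝ) : EReal) ≤ conj2 F (ys2, x2) := by
          have h := le_iSup (fun q' : X × Dd X =>
            ((ys2 q'.1 + q'.2 x2 : ℝ) : EReal) - F q') q
          rw [hr, ← EReal.coe_sub] at h
          exact h
        have hcomb := ereal_comb ha hb hP hQ
        refine le_trans (le_of_eq ?_) hcomb
        rw [hr, ← EReal.coe_sub]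
        norm_cast
        simp only [ContinuousLinearMap.add_apply, ContinuousLinearMap.smul_apply, map_add,
          map_smul, smul_eq_mul]
        linear_combination r * hab
    have hCconv : Convex ℝ C := by
      intro p hp q hq a b ha hb hab
      rcases ha.eq_or_lt with rfl | ha'
      · have hb1 : b = 1 := by linarith
        subst hb1
        simpa using hq
      rcases hb.eq_or_lt with rfl | hb'
      · have ha1 : a = 1 := by linarith
        subst ha1
        simpa using hp
      show ((-(a • p + b • q).2 : ℝ) : EReal) ≤ Phi (a • p + b • q).1
      apply ereal_coe_le_of_forall
      intro δ hδ
      have h1 : ((-p.2 - δ : ℝ) : EReal) < Phi p.1 :=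
        lt_of_lt_of_le (EReal.coe_lt_coe_iff.2 (by linarith)) hp
      have h2 : ((-q.2 - δ : ℝ) : EReal) < Phi q.1 :=
        lt_of_lt_of_le (EReal.coe_lt_coe_iff.2 (by linarith)) hq
      rw [hPhi_def, lt_iSup_iff] at h1 h2
      obtain ⟨x1, hx1⟩ := h1
      obtain ⟨x2, hx2⟩ := h2
      have hx1' : conj2 F (p.1, x1) ≤ ((ps x1 + p.2 + δ : ℝ) : EReal) := by
        have := ereal_lt_sub hx1
        refine le_of_lt (lt_of_lt_of_le this (le_of_eq ?_))
        norm_cast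
        ring
      have hx2' : conj2 F (q.1, x2) ≤ ((ps x2 + q.2 + δ : ℝ) : EReal) := by
        have := ereal_lt_sub hx2
        refine le_of_lt (lt_of_lt_of_le this (le_of_eq ?_))
        norm_cast
        ring
      have hub := ereal_comb' ha hb hx1' hx2'
      have hlow : ((ps (a • x1 + b • x2) : ℝ) : EReal)
          - ((a * (ps x1 + p.2 + δ) + b * (ps x2 + q.2 + δ) : ℝ) : EReal)
          ≤ ((ps (a • x1 + b • x2) : ℝ) : EReal)
            - ((a : EReal) * conj2 F (p.1, x1) + (b : EReal) * conj2 F (q.1, x2)) :=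
        EReal.sub_le_sub (le_refl _) hub
      have hmid : ((ps (a • x1 + b • x2) : ℝ) : EReal)
          - ((a : EReal) * conj2 F (p.1, x1) + (b : EReal) * conj2 F (q.1, x2))
          ≤ Phi (a • p + b • q).1 := by
        have hterm : ((ps (a • x1 + b • x2) : ℝ) : EReal)
            - conj2 F ((a • p + b • q).1, a • x1 + b • x2) ≤ Phi (a • p + b • q).1 :=
          le_iSup (fun x : X => ((ps x : ℝ) : EReal)
            - conj2 F ((a • p + b • q).1, x)) (a • x1 + b • x2)
        refine le_trans (EReal.sub_le_sub (le_refl _) ?_) hterm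
        have := hGconv a b ha hb hab p.1 q.1 x1 x2
        simpa using this
      calc ((-(a • p + b • q).2 - δ : ℝ) : EReal)
          = ((ps (a • x1 + b • x2)
              - (a * (ps x1 + p.2 + δ) + b * (ps x2 + q.2 + δ)) : ℝ) : EReal) := by
            norm_cast
            simp only [Prod.snd_add, Prod.smul_snd, smul_eq_mul, map_add, map_smul]
            linear_combination δ * hab
        _ = ((ps (a • x1 + b • x2) : ℝ) : EReal)
              - ((a * (ps x1 + p.2 + δ) + b * (ps x2 + q.2 + δ) : ℝ) : EReal) :=
            EReal.coe_sub _ _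
        _ ≤ ((ps (a • x1 + b • x2) : ℝ) : EReal)
              - ((a : EReal) * conj2 F (p.1, x1) + (b : EReal) * conj2 F (q.1, x2)) := hlow
        _ ≤ Phi (a • p + b • q).1 := hmid
    have hΘps : (fun ys : Dd X => -(⨆ x : X, ((ps x : ℝ) : EReal) - conj2 F (ys, x))) ps
        = ((α : ℝ) : EReal) := by
      show -(Phi ps) = _
      rw [hΦps, ← EReal.coe_neg]
      norm_num
    have hev := hlsc ((α/2 : ℝ) : EReal)
      (by show ((α/2 : ℝ) : EReal) < (fun ys : Dd X => -(⨆ x : X, ((ps x : ℝ) : EReal) - conj2 F (ys, x))) ps; rw [hΘps]; exact EReal.coe_lt_coe_iff.2 (by linarith))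
    obtain ⟨U, hU, hUopen, hUps⟩ := eventually_nhds_iff.mp hev
    have hnot : ((ps, (0:ℝ)) : Dd X × ℝ) ∉ closure C := by
      intro hmem
      rw [mem_closure_iff] at hmem
      obtain ⟨⟨ys, t⟩, h1, h2⟩ := hmem (U ×ˢ Set.Iio (α/2)) (hUopen.prod isOpen_Iio)
        ⟨hUps, by simpa using half_pos hα⟩
      have hyU : ys ∈ U := h1.1
      have htlt : t < α/2 := h1.2
      have hΘys := hU ys hyU
      have hC2 : -(Phi ys) ≤ ((t : ℝ) : EReal) := by
        apply EReal.neg_le.mpr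
        have h2' : ((-t : ℝ) : EReal) ≤ Phi ys := h2
        rw [EReal.coe_neg] at h2'
        exact h2'
      have hcon : ((α/2 : ℝ) : EReal) < ((t : ℝ) : EReal) := lt_of_lt_of_le hΘys hC2
      exact absurd (EReal.coe_lt_coe_iff.mp hcon) (by linarith)
    obtain ⟨f, u, hfs, hfx⟩ :=
      geometric_hahn_banach_closed_point hCconv.closure isClosed_closure hnot
    have hfC : ∀ p ∈ C, f p < u := fun p hp => hfs p (subset_closure hp)
    have hfeval : ∀ (ys : Dd X) (t : ℝ), f (ys, t) = f (ys, 0) + t * f (0, 1) := by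
      intro ys t
      have hsplit : ((ys, t) : Dd X × ℝ) = (ys, (0:ℝ)) + t • ((0 : Dd X), (1:ℝ)) := by
        ext <;> simp
      rw [hsplit, map_add, map_smul, smul_eq_mul]
    have hmemC : ∀ n : ℕ, ((ps, α + n) : Dd X × ℝ) ∈ C := by
      intro n
      show ((-(α + (n : ℝ)) : ℝ) : EReal) ≤ Phi ps
      rw [hΦps]
      exact EReal.coe_le_coe_iff.2 (by
        have : (0:ℝ) ≤ (n : ℝ) := Nat.cast_nonneg n
        linarith)
    set c := f (0, 1) with hc_def
    have hclt : c < 0 := by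
      rcases lt_trichotomy c 0 with h | h | h
      · exact h
      · exfalso
        have h1 := hfC _ (hmemC 0)
        rw [hfeval] at h1
        have h2 := hfx
        rw [hfeval] at h2
        rw [h] at h1 h2
        simp at h1 h2
        linarith
      · exfalso
        obtain ⟨n, hn⟩ := exists_nat_gt ((u - f (ps, 0)) / c - α)
        have h1 := hfC _ (hmemC n)
        rw [hfeval] at h1
        have h3 : (u - f (ps, 0)) / c < α + n := by linarith
        have h4 : u - f (ps, 0) < (α + n) * c := by
          rw [div_lt_iff₀ h] at h3
          linarith
        linarith
    obtain ⟨x₁, hx₁⟩ := hX ((-c)⁻¹ • (f.comp (ContinuousLinearMap.inl ℝ (Dd X) ℝ)))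
    have hx₁' : ∀ ys : Dd X, ys x₁ = (-c)⁻¹ * f (ys, 0) := by
      intro ys
      have h := congrArg (fun g : StrongDual ℝ (Dd X) => g ys) hx₁
      simp only [NormedSpace.dual_def, ContinuousLinearMap.smul_apply,
        ContinuousLinearMap.comp_apply, ContinuousLinearMap.inl_apply, smul_eq_mul] at h
      exact h
    have hcpos : (0:ℝ) < -c := by linarith
    have hfys0 : ∀ ys : Dd X, f (ys, 0) = (-c) * ys x₁ := by
      intro ys
      have hcne : -c ≠ 0 := by linarith
      rw [hx₁' ys, ← mul_assoc, mul_inv_cancel₀ hcne, one_mul]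
    refine ⟨x₁, hS.2 x₁ ps ?_⟩
    intro y ys hys
    have hGle : conj2 F (ys, y) ≤ ((ys y : ℝ) : EReal) := by
      apply iSup_le
      intro q
      have := ereal_sub_le_coe (r := ys q.1 + q.2 y) (repr_ge_graph hF hys q)
      refine le_trans this (le_of_eq ?_)
      norm_cast
      ring
    have hmem : ((ys, ys y - ps y) : Dd X × ℝ) ∈ C := by
      show ((-(ys y - ps y) : ℝ) : EReal) ≤ Phi ys
      have hterm := ereal_coe_le_sub (r := ps y) hGle
      have hle := le_trans hterm
        (le_iSup (fun x : X => ((ps x : ℝ) : EReal) - conj2 F (ys, x)) y)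
      refine le_trans (le_of_eq ?_) hle
      norm_cast
      ring
    have h1 := hfC _ hmem
    rw [hfeval, hfys0] at h1
    have h2 := hfx
    rw [hfeval, hfys0] at h2
    rw [zero_mul, add_zero] at h2
    have h5 := lt_trans h1 h2
    simp only [ContinuousLinearMap.sub_apply, map_sub]
    obtain ⟨A, hA⟩ : ∃ A : ℝ, ps x₁ = A := ⟨_, rfl⟩
    obtain ⟨B, hB⟩ : ∃ B : ℝ, ps y = B := ⟨_, rfl⟩
    obtain ⟨D, hD⟩ : ∃ D : ℝ, ys x₁ = D := ⟨_, rfl⟩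
    obtain ⟨E, hE⟩ : ∃ E : ℝ, ys y = E := ⟨_, rfl⟩
    rw [hA, hB, hD, hE] at h5 ⊢
    by_contra hcon
    push_neg at hcon
    exact real_contra hcpos h5 hcon


/-- characterization of surjectivity of a maximal monotone operator via
its representative functions. -/
theorem surjective_iff_repr_condition [CompleteSpace X] (hX : Reflexive' X)
    (S : X → Set (Dd X)) (hS : IsMaxMonotone S) :
    (∀ ps : Dd X, ∃ x : X, ps ∈ S x) ↔
    (∀ ps : Dd X, ∃ F : X × Dd X → EReal, IsRepr S F ∧
      LowerSemicontinuousAt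
        (fun ys : Dd X => -(⨆ x : X, ((ps x : ℝ) : EReal) - conj2 F (ys, x))) ps ∧
      ∃ x : X, ps ∈ esubdiff (fun y : X => conj2 F (ps, y)) x) := by
  constructor
  · intro hsurj ps
    obtain ⟨x₀, hx₀⟩ := hsurj ps
    obtain ⟨hF, hlsc, x, h1, h2, h3⟩ := forward_dir hS hx₀
    exact ⟨fitz S, hF, hlsc, x, h1, h2, h3⟩
  · intro hcond ps
    obtain ⟨F, _hF, hlsc, x₀, hsub⟩ := hcond ps
    exact backward_dir hX hS _hF hlsc hsub.1 hsub.2.1 hsub.2.2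
end
end

section
/- Let X be a reflexive Banach space, S : X ⇉ X* maximal monotone, and g : X → ℝ ∪ {+∞} proper convex lower semicontinuous such that both g and g* are everywhere real-valued. Then for every p ∈ X the operator x ↦ S(p + x) + ∂g(x) is surjective. -/
noncomputable section

open scoped Topology Pointwise

variable {X : Type*} [NormedAddCommGroup X] [NormedSpace ℝ X]

namespace SurjAux

open Set Filter
open scoped Topology

section GeneralAux
variable {E : Type*} [NormedAddCommGroup E] [NormedSpace ℝ E]


variable {E : Type*} [NormedAddCommGroup E] [NormedSpace ℝ E]

/-- A real-valued convex function with closed sublevel sets on a Banach space is continuous. -/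
lemma continuous_of_convex_closedSublevels [CompleteSpace E]
    (f : E → ℝ) (hconv : ConvexOn ℝ Set.univ f)
    (hcl : ∀ c : ℝ, IsClosed {x | f x ≤ c}) : Continuous f := by
  have hcov : (⋃ n : ℕ, {x | f x ≤ (n : ℝ)}) = Set.univ := by
    ext x; simp only [Set.mem_iUnion, Set.mem_setOf_eq, Set.mem_univ, iff_true]
    obtain ⟨n, hn⟩ := exists_nat_ge (f x); exact ⟨n, hn⟩
  obtain ⟨n, x₀, hx₀⟩ := nonempty_interior_of_iUnion_of_closed (fun n : ℕ => hcl n) hcov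
  have hb : (𝓝 x₀).IsBoundedUnder (· ≤ ·) f := by
    refine ⟨(n : ℝ), eventually_map.mpr (Filter.mem_of_superset (isOpen_interior.mem_nhds hx₀) ?_)⟩
    exact fun y hy => interior_subset hy
  have := (hconv.continuousOn_tfae isOpen_univ ⟨x₀, trivial⟩).out 3 1
  rw [← continuousOn_univ]
  exact this.mp ⟨x₀, trivial, hb⟩

lemma convex_strictEpi {f : E → ℝ} (hconv : ConvexOn ℝ Set.univ f) :
    Convex ℝ {p : E × ℝ | f p.1 < p.2} := by
  rintro ⟨x₁, t₁⟩ h₁ ⟨x₂, t₂⟩ h₂ a b ha hb hab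
  simp only [mem_setOf_eq] at h₁ h₂ ⊢
  have hc := hconv.2 (mem_univ x₁) (mem_univ x₂) ha hb hab
  have : a * f x₁ + b * f x₂ < a * t₁ + b * t₂ := by
    rcases ha.eq_or_lt with rfl | ha'
    · simp only [zero_add] at hab; subst hab; simpa using h₂
    · have h1 : a * f x₁ < a * t₁ := (mul_lt_mul_iff_right₀ ha').mpr h₁
      have h2 : b * f x₂ ≤ b * t₂ := mul_le_mul_of_nonneg_left h₂.le hb
      linarith
  calc f (a • x₁ + b • x₂) ≤ a * f x₁ + b * f x₂ := hc
    _ < _ := this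

/-- Existence of a subgradient for a continuous convex function at any point. -/
lemma exists_subgradient {f : E → ℝ} (hconv : ConvexOn ℝ Set.univ f)
    (hcont : Continuous f) (z : E) :
    ∃ u : E →L[ℝ] ℝ, ∀ x, u x - f x ≤ u z - f z := by
  set U : Set (E × ℝ) := {p | f p.1 < p.2} with hU
  have hUo : IsOpen U := isOpen_lt (hcont.comp continuous_fst) continuous_snd
  have hz : (z, f z) ∉ U := by simp [hU]
  obtain ⟨fL, hfL⟩ := geometric_hahn_banach_open_point (convex_strictEpi hconv) hUo hz
  set s := fL (0, 1) with hs_def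
  have hdec : ∀ (w : E) (t : ℝ), fL (w, t) = fL (w, 0) + t * s := by
    intro w t
    have : ((w, t) : E × ℝ) = (w, 0) + t • ((0 : E), (1 : ℝ)) := by
      simp [Prod.ext_iff]
    rw [this, map_add, map_smul, smul_eq_mul]
  have hs : s < 0 := by
    have h1 := hfL (z, f z + 1) (by simp [hU])
    rw [hdec z (f z + 1), hdec z (f z)] at h1
    linarith
  have hsne : s ≠ 0 := ne_of_lt hs
  have hpos : (0 : ℝ) < (-s)⁻¹ := inv_pos.mpr (neg_pos.mpr hs)
  refine ⟨(-s)⁻¹ • fL.comp (ContinuousLinearMap.inl ℝ E ℝ), fun x => ?_⟩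
  set u : E →L[ℝ] ℝ := (-s)⁻¹ • fL.comp (ContinuousLinearMap.inl ℝ E ℝ) with hu_def
  have hu : ∀ y : E, u y = (-s)⁻¹ * fL (y, 0) := fun y => rfl
  have key : ∀ (t : ℝ), f x < t → u x - t < u z - f z := by
    intro t hxt
    have h1 := hfL (x, t) (by simpa [hU] using hxt)
    rw [hdec x t, hdec z (f z)] at h1
    have h2 := mul_lt_mul_of_pos_left h1 hpos
    rw [hu, hu]
    have e : ∀ (A T : ℝ), (-s)⁻¹ * (A + T * s) = (-s)⁻¹ * A - T := by
      intro A T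
      rw [mul_comm, mul_comm ((-s)⁻¹) A, ← div_eq_mul_inv, ← div_eq_mul_inv,
        add_div, mul_div_assoc, div_neg, div_neg, div_self hsne]
      ring
    rw [e, e] at h2; exact h2
  refine le_of_forall_pos_le_add fun ε hε => ?_
  have := key (f x + ε) (by linarith)
  linarith

/-- Fenchel-type separation: if `A` is an extended-real function, `B` a continuous convex
real function, the set `V = {(w,t) | A w ≤ -t}` is convex and nonempty, and `-B ≤ A`,
then there is an affine separator. -/
lemma fenchel_sep {A : E → EReal} {B : E → ℝ}
    (hBconv : ConvexOn ℝ Set.univ B) (hBcont : Continuous B)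
    (hVconv : Convex ℝ {p : E × ℝ | A p.1 ≤ ((-p.2 : ℝ) : EReal)})
    (hVne : ∃ p : E × ℝ, A p.1 ≤ ((-p.2 : ℝ) : EReal))
    (hAB : ∀ w, ((-B w : ℝ) : EReal) ≤ A w) :
    ∃ (φ : E →L[ℝ] ℝ) (c : ℝ),
      (∀ w, φ w - B w ≤ c) ∧ (∀ w t, A w ≤ ((-t : ℝ) : EReal) → c ≤ φ w - t) := by
  set U : Set (E × ℝ) := {p | B p.1 < p.2} with hU
  set V : Set (E × ℝ) := {p | A p.1 ≤ ((-p.2 : ℝ) : EReal)} with hV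
  have hUo : IsOpen U := isOpen_lt (hBcont.comp continuous_fst) continuous_snd
  have hdisj : Disjoint U V := by
    rw [Set.disjoint_left]
    rintro ⟨w, t⟩ hu hv
    simp only [hU, hV, mem_setOf_eq] at hu hv
    have h1 : ((-B w : ℝ) : EReal) ≤ ((-t : ℝ) : EReal) := le_trans (hAB w) hv
    rw [EReal.coe_le_coe_iff] at h1
    linarith
  obtain ⟨fL, c₀, hfU, hfV⟩ :=
    geometric_hahn_banach_open (convex_strictEpi hBconv) hUo hVconv hdisj
  set s := fL (0, 1) with hs_def
  have hdec : ∀ (w : E) (t : ℝ), fL (w, t) = fL (w, 0) + t * s := by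
    intro w t
    have : ((w, t) : E × ℝ) = (w, 0) + t • ((0 : E), (1 : ℝ)) := by simp [Prod.ext_iff]
    rw [this, map_add, map_smul, smul_eq_mul]
  obtain ⟨⟨ω₀, t₀⟩, hp₀⟩ := hVne
  have hs : s < 0 := by
    rcases lt_trichotomy s 0 with h | h | h
    · exact h
    · exfalso
      have h1 := hfU (ω₀, B ω₀ + 1) (by simp [hU])
      have h2 := hfV (ω₀, t₀) hp₀
      rw [hdec] at h1 h2
      rw [h] at h1 h2
      linarith
    · exfalso
      set t₁ : ℝ := max (B ω₀ + 1) ((c₀ - fL (ω₀, 0)) / s + 1) with ht₁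
      have h1 := hfU (ω₀, t₁) (by
        simp only [hU, mem_setOf_eq]
        have := le_max_left (B ω₀ + 1) ((c₀ - fL (ω₀, 0)) / s + 1)
        linarith)
      rw [hdec] at h1
      have h2 : (c₀ - fL (ω₀, 0)) / s + 1 ≤ t₁ := le_max_right _ _
      have h3 : (c₀ - fL (ω₀, 0)) / s < t₁ := by linarith
      have h4 : c₀ - fL (ω₀, 0) < t₁ * s := by
        have := (div_lt_iff₀ h).mp h3
        linarith [this]
      linarith
  have hsne : s ≠ 0 := ne_of_lt hs
  have hpos : (0 : ℝ) < (-s)⁻¹ := inv_pos.mpr (neg_pos.mpr hs)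
  have e : ∀ (Y T : ℝ), (-s)⁻¹ * (Y + T * s) = (-s)⁻¹ * Y - T := by
    intro Y T
    rw [mul_comm, mul_comm ((-s)⁻¹) Y, ← div_eq_mul_inv, ← div_eq_mul_inv,
      add_div, mul_div_assoc, div_neg, div_neg, div_self hsne]
    ring
  refine ⟨(-s)⁻¹ • fL.comp (ContinuousLinearMap.inl ℝ E ℝ), (-s)⁻¹ * c₀, ?_, ?_⟩
  · intro w
    have key : ∀ t : ℝ, B w < t → (-s)⁻¹ * fL (w, 0) - t < (-s)⁻¹ * c₀ := by
      intro t hwt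
      have h1 := hfU (w, t) (by simpa [hU] using hwt)
      rw [hdec] at h1
      have h2 := mul_lt_mul_of_pos_left h1 hpos
      rw [e] at h2
      exact h2
    show (-s)⁻¹ * fL (w, 0) - B w ≤ (-s)⁻¹ * c₀
    refine le_of_forall_pos_le_add fun ε hε => ?_
    have := key (B w + ε) (by linarith)
    linarith
  · intro w t hwt
    have h1 := hfV (w, t) hwt
    rw [hdec] at h1
    have h2 := mul_le_mul_of_nonneg_left h1 hpos.le
    rw [e] at h2
    exact h2

/-- If `(L - q : EReal) ≤ F` then `(L : EReal) - F ≤ q`. -/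
lemma coe_sub_le {L q : ℝ} {F : EReal} (hF : ((L - q : ℝ) : EReal) ≤ F) :
    (L : EReal) - F ≤ (q : EReal) := by
  induction F using EReal.rec with
  | bot =>
      rw [le_bot_iff] at hF
      exact absurd hF (EReal.coe_ne_bot _)
  | coe r =>
      rw [← EReal.coe_sub]
      rw [EReal.coe_le_coe_iff] at hF ⊢
      linarith
  | top => simp

lemma combo_bound {L₁ L₂ c₁ c₂ a b : ℝ} (ha : 0 ≤ a) (hb : 0 ≤ b) (hab : a + b = 1)
    {F : EReal} (hFne : F ≠ ⊥)
    (h₁ : (L₁ : EReal) - F ≤ (c₁ : EReal)) (h₂ : (L₂ : EReal) - F ≤ (c₂ : EReal)) :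
    ((a * L₁ + b * L₂ : ℝ) : EReal) - F ≤ ((a * c₁ + b * c₂ : ℝ) : EReal) := by
  induction F using EReal.rec with
  | bot => exact absurd rfl hFne
  | coe r =>
      rw [← EReal.coe_sub] at h₁ h₂ ⊢
      rw [EReal.coe_le_coe_iff] at h₁ h₂ ⊢
      have hr : a * r + b * r = r := by rw [← add_mul, hab, one_mul]
      have k₁ := mul_le_mul_of_nonneg_left h₁ ha
      have k₂ := mul_le_mul_of_nonneg_left h₂ hb
      nlinarith [k₁, k₂, hr]
  | top => simp


end GeneralAux

set_option maxHeartbeats 1000000 in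
/-- The key solvability result: `0 ∈ range (S + ∂g)` in real form. -/
theorem key {X : Type*} [NormedAddCommGroup X] [NormedSpace ℝ X] [CompleteSpace X]
    (hX : Reflexive' X) (S : X → Set (Dd X)) (hS : IsMaxMonotone S)
    (gR : X → ℝ) (hgRconv : ConvexOn ℝ Set.univ gR)
    (hgRcl : ∀ c : ℝ, IsClosed {x | gR x ≤ c})
    (hgsbd : ∀ u : Dd X, BddAbove (Set.range fun x => u x - gR x)) :
    ∃ z : X, ∃ zs ∈ S z, ∀ y, gR z + (-zs) (y - z) ≤ gR y := by
  classical
  -- real conjugate of gR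
  set gs : Dd X → ℝ := fun u => sSup (Set.range fun x => u x - gR x) with hgs_def
  have hFY : ∀ (u : Dd X) (x : X), u x - gR x ≤ gs u := fun u x =>
    le_csSup (hgsbd u) ⟨x, rfl⟩
  have hgs_le : ∀ (u : Dd X) (c : ℝ), (∀ x, u x - gR x ≤ c) → gs u ≤ c := by
    intro u c h
    exact csSup_le (Set.range_nonempty _) (by rintro r ⟨x, rfl⟩; exact h x)
  -- convexity and continuity of gs
  have hgsconv : ConvexOn ℝ Set.univ gs := by
    refine ⟨convex_univ, fun u _ v _ a b ha hb hab => ?_⟩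
    refine hgs_le _ _ fun x => ?_
    have h1 := mul_le_mul_of_nonneg_left (hFY u x) ha
    have h2 := mul_le_mul_of_nonneg_left (hFY v x) hb
    have e : (a • u + b • v) x = a * u x + b * v x := by
      simp [ContinuousLinearMap.add_apply, ContinuousLinearMap.smul_apply, smul_eq_mul]
    rw [e]
    simp only [smul_eq_mul]
    have hr : a * gR x + b * gR x = gR x := by rw [← add_mul, hab, one_mul]
    linarith
  have hgRcont : Continuous gR := continuous_of_convex_closedSublevels gR hgRconv hgRcl
  have hgscl : ∀ c : ℝ, IsClosed {u : Dd X | gs u ≤ c} := by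
    intro c
    have he : {u : Dd X | gs u ≤ c} = ⋂ x : X, {u : Dd X | u x - gR x ≤ c} := by
      ext u
      simp only [mem_setOf_eq, mem_iInter]
      exact ⟨fun h x => le_trans (hFY u x) h, hgs_le u c⟩
    rw [he]
    refine isClosed_iInter fun x => ?_
    exact isClosed_le ((ContinuousLinearMap.apply ℝ ℝ x).continuous.sub continuous_const)
      continuous_const
  have hgscont : Continuous gs := continuous_of_convex_closedSublevels gs hgsconv hgscl
  -- graph of S is nonempty
  have hGne : ∃ w : X × Dd X, w.2 ∈ S w.1 := by
    by_contra h
    push_neg at h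
    exact h (0, 0) (hS.2 0 0 fun y ys hy => absurd hy (h (y, ys)))
  obtain ⟨w₀, hw₀⟩ := hGne
  set F : X × Dd X → EReal := fitz S with hF_def
  -- sup characterization of fitz
  have term_le_F : ∀ (w : X × Dd X), w.2 ∈ S w.1 → ∀ ζ : X × Dd X,
      ((w.2 ζ.1 + ζ.2 w.1 - w.2 w.1 : ℝ) : EReal) ≤ F ζ := by
    intro w hw ζ
    exact le_iSup (fun q : {q : X × Dd X // q.2 ∈ S q.1} =>
      ((q.1.2 ζ.1 + ζ.2 q.1.1 - q.1.2 q.1.1 : ℝ) : EReal)) ⟨w, hw⟩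
  have F_le : ∀ (ζ : X × Dd X) (c : ℝ),
      (∀ w : X × Dd X, w.2 ∈ S w.1 → w.2 ζ.1 + ζ.2 w.1 - w.2 w.1 ≤ c) → F ζ ≤ (c : EReal) :=
    fun ζ c h => iSup_le fun q => EReal.coe_le_coe_iff.mpr (h q.1 q.2)
  have hFne_bot : ∀ ζ : X × Dd X, F ζ ≠ ⊥ := by
    intro ζ hbot
    have h := term_le_F w₀ hw₀ ζ
    rw [hbot, le_bot_iff] at h
    exact EReal.coe_ne_bot _ h
  -- expansion of the pairing
  have expand : ∀ (u v : Dd X) (x y : X), (u - v) (x - y) = u x - u y - v x + v y := by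
    intro u v x y
    simp only [ContinuousLinearMap.sub_apply, map_sub]
    ring
  -- F ≥ duality product (uses maximality)
  have hL3 : ∀ ζ : X × Dd X, ((ζ.2 ζ.1 : ℝ) : EReal) ≤ F ζ := by
    intro ζ
    by_contra hcon
    push_neg at hcon
    have hmem : ζ.2 ∈ S ζ.1 := by
      refine hS.2 ζ.1 ζ.2 fun y ys hy => ?_
      have h1 := lt_of_le_of_lt (term_le_F (y, ys) hy ζ) hcon
      rw [EReal.coe_lt_coe_iff] at h1
      rw [expand]
      linarith
    have h2 := term_le_F ζ hmem ζ
    have e : (ζ.2 ζ.1 + ζ.2 ζ.1 - ζ.2 ζ.1 : ℝ) = ζ.2 ζ.1 := by ring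
    rw [e] at h2
    exact absurd (lt_of_le_of_lt h2 hcon) (lt_irrefl _)
  -- F equals the duality product on the graph (uses monotonicity)
  have F_graph : ∀ w : X × Dd X, w.2 ∈ S w.1 → F w = ((w.2 w.1 : ℝ) : EReal) := by
    intro w hw
    refine le_antisymm (F_le w _ fun v hv => ?_) (by
      have h := term_le_F w hw w
      have e : (w.2 w.1 + w.2 w.1 - w.2 w.1 : ℝ) = w.2 w.1 := by ring
      rwa [e] at h)
    have h0 := hS.1 hv hw
    rw [expand] at h0
    linarith
  set A : Dd X × X → EReal := conj2 F with hA_def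
  have termA_le : ∀ (ω : Dd X × X) (q : X × Dd X),
      ((ω.1 q.1 + q.2 ω.2 : ℝ) : EReal) - F q ≤ A ω := fun ω q =>
    le_iSup (fun q : X × Dd X => ((ω.1 q.1 + q.2 ω.2 : ℝ) : EReal) - F q) q
  have A_le : ∀ (ω : Dd X × X) (c : ℝ),
      (∀ q : X × Dd X, ((ω.1 q.1 + q.2 ω.2 : ℝ) : EReal) - F q ≤ (c : EReal)) →
      A ω ≤ (c : EReal) := fun ω c h => iSup_le h
  -- conj2 F dominates the (swapped) duality product (uses maximality)
  have hL4 : ∀ ω : Dd X × X, ((ω.1 ω.2 : ℝ) : EReal) ≤ A ω := by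
    intro ω
    by_cases hmem : ω.1 ∈ S ω.2
    · have h := termA_le ω (ω.2, ω.1)
      rw [F_graph (ω.2, ω.1) hmem] at h
      rw [← EReal.coe_sub] at h
      have e : (ω.1 ω.2 + ω.1 ω.2 - ω.1 ω.2 : ℝ) = ω.1 ω.2 := by ring
      rwa [e] at h
    · obtain ⟨w, ws, hws, hlt⟩ : ∃ w ws, ws ∈ S w ∧ (ω.1 - ws) (ω.2 - w) < 0 := by
        by_contra hc
        push_neg at hc
        exact hmem (hS.2 ω.2 ω.1 fun y' ys' hy' => hc y' ys' hy')
      have h := termA_le ω (w, ws)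
      rw [F_graph (w, ws) hws, ← EReal.coe_sub] at h
      refine le_trans ?_ h
      rw [EReal.coe_le_coe_iff]
      rw [expand] at hlt
      linarith
  -- conj2 F on (swapped) graph points
  have A_graph : ∀ w : X × Dd X, w.2 ∈ S w.1 → A (w.2, w.1) ≤ ((w.2 w.1 : ℝ) : EReal) := by
    intro w hw
    refine A_le _ _ fun q => ?_
    exact coe_sub_le (term_le_F w hw q)
  -- the continuous convex function B
  set B : Dd X × X → ℝ := fun ω => gs (-ω.1) + gR ω.2 with hB_def
  have hBconv : ConvexOn ℝ Set.univ B := by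
    refine ⟨convex_univ, fun ω₁ _ ω₂ _ a b ha hb hab => ?_⟩
    have e1 : (-(a • ω₁ + b • ω₂).1 : Dd X) = a • (-ω₁.1) + b • (-ω₂.1) := by
      show -(a • ω₁.1 + b • ω₂.1) = a • (-ω₁.1) + b • (-ω₂.1)
      rw [smul_neg, smul_neg, ← neg_add]
    have h1 := hgsconv.2 (mem_univ (-ω₁.1)) (mem_univ (-ω₂.1)) ha hb hab
    have h2 := hgRconv.2 (mem_univ ω₁.2) (mem_univ ω₂.2) ha hb hab
    show gs (-(a • ω₁ + b • ω₂).1) + gR ((a • ω₁ + b • ω₂).2) ≤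
      a * (gs (-ω₁.1) + gR ω₁.2) + b * (gs (-ω₂.1) + gR ω₂.2)
    rw [e1]
    have e2 : (a • ω₁ + b • ω₂).2 = a • ω₁.2 + b • ω₂.2 := rfl
    rw [e2]
    calc gs (a • (-ω₁.1) + b • (-ω₂.1)) + gR (a • ω₁.2 + b • ω₂.2)
        ≤ (a * gs (-ω₁.1) + b * gs (-ω₂.1)) + (a * gR ω₁.2 + b * gR ω₂.2) := add_le_add h1 h2
      _ = a * (gs (-ω₁.1) + gR ω₁.2) + b * (gs (-ω₂.1) + gR ω₂.2) := by ring
  have hBcont : Continuous B :=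
    (hgscont.comp continuous_fst.neg).add (hgRcont.comp continuous_snd)
  -- convexity of V
  have hVconv : Convex ℝ {p : (Dd X × X) × ℝ | A p.1 ≤ ((-p.2 : ℝ) : EReal)} := by
    rintro ⟨ω₁, t₁⟩ h₁ ⟨ω₂, t₂⟩ h₂ a b ha hb hab
    simp only [mem_setOf_eq] at h₁ h₂ ⊢
    show A (a • ω₁ + b • ω₂) ≤ ((-(a * t₁ + b * t₂) : ℝ) : EReal)
    refine A_le _ _ fun q => ?_
    have e : ((a • ω₁ + b • ω₂).1 q.1 + q.2 ((a • ω₁ + b • ω₂).2) : ℝ)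
        = a * (ω₁.1 q.1 + q.2 ω₁.2) + b * (ω₂.1 q.1 + q.2 ω₂.2) := by
      have : (a • ω₁ + b • ω₂).1 = a • ω₁.1 + b • ω₂.1 := rfl
      rw [this]
      have : (a • ω₁ + b • ω₂).2 = a • ω₁.2 + b • ω₂.2 := rfl
      rw [this]
      simp only [ContinuousLinearMap.add_apply, ContinuousLinearMap.smul_apply,
        map_add, map_smul, smul_eq_mul]
      ring
    rw [e]
    have e2 : (-(a * t₁ + b * t₂) : ℝ) = a * (-t₁) + b * (-t₂) := by ring
    rw [e2]
    exact combo_bound ha hb hab (hFne_bot q)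
      (le_trans (termA_le ω₁ q) h₁) (le_trans (termA_le ω₂ q) h₂)
  have hVne : ∃ p : (Dd X × X) × ℝ, A p.1 ≤ ((-p.2 : ℝ) : EReal) := by
    refine ⟨((w₀.2, w₀.1), -(w₀.2 w₀.1)), ?_⟩
    simp only [neg_neg]
    exact A_graph w₀ hw₀
  have hAB : ∀ ω : Dd X × X, ((-B ω : ℝ) : EReal) ≤ A ω := by
    intro ω
    refine le_trans ?_ (hL4 ω)
    rw [EReal.coe_le_coe_iff]
    have h := hFY (-ω.1) ω.2
    have e : (-ω.1 : Dd X) ω.2 = -(ω.1 ω.2) := by simp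
    rw [e] at h
    simp only [hB_def]
    linarith
  obtain ⟨φ, c, hIc, hIIc⟩ := fenchel_sep hBconv hBcont hVconv hVne hAB
  -- decompose φ
  set Λ : (Dd X) →L[ℝ] ℝ := φ.comp (ContinuousLinearMap.inl ℝ (Dd X) X) with hΛ_def
  set ψ : X →L[ℝ] ℝ := φ.comp (ContinuousLinearMap.inr ℝ (Dd X) X) with hψ_def
  have hφ : ∀ ω : Dd X × X, φ ω = Λ ω.1 + ψ ω.2 := by
    intro ω
    have e : ω = (ω.1, 0) + (0, ω.2) := by simp [Prod.ext_iff]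
    conv_lhs => rw [e]
    rw [map_add]
    rfl
  obtain ⟨x₀, hx₀⟩ := hX Λ
  have hΛapp : ∀ u : Dd X, Λ u = u x₀ := fun u => by
    rw [← hx₀]; exact NormedSpace.dual_def ℝ X x₀ u
  -- the two inequality families
  have hI : ∀ (u : Dd X) (y : X), u x₀ + ψ y - (gs (-u) + gR y) ≤ c := by
    intro u y
    have h := hIc (u, y)
    rw [hφ (u, y)] at h
    simp only [hΛapp] at h
    exact h
  have hII : ∀ w : X × Dd X, w.2 ∈ S w.1 → c ≤ w.2 x₀ + ψ w.1 + w.2 w.1 := by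
    intro w hw
    have h := hIIc (w.2, w.1) (-(w.2 w.1)) (by simp only [neg_neg]; exact A_graph w hw)
    rw [hφ (w.2, w.1)] at h
    rw [hΛapp] at h
    simp only at h
    linarith
  -- subgradient of gR at -x₀
  obtain ⟨u₀, hu₀⟩ := exists_subgradient hgRconv hgRcont (-x₀)
  have hgs_u₀ : gs u₀ ≤ u₀ (-x₀) - gR (-x₀) := hgs_le u₀ _ fun x => hu₀ x
  have hIII : ∀ y : X, ψ y - gR y ≤ c - gR (-x₀) := by
    intro y
    have h := hI (-u₀) y
    have e1 : (-u₀ : Dd X) x₀ = u₀ (-x₀) := by simp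
    have e2 : (-(-u₀) : Dd X) = u₀ := neg_neg u₀
    rw [e1, e2] at h
    linarith
  have hIV : gR (-x₀) + gs ψ ≤ c := by
    have := hgs_le ψ (c - gR (-x₀)) hIII
    linarith
  set z : X := -x₀ with hz_def
  set zs : Dd X := -ψ with hzs_def
  -- F (z, zs) ≤ -c
  have hFz : F (z, zs) ≤ ((-c : ℝ) : EReal) := by
    refine F_le _ _ fun w hw => ?_
    have h := hII w hw
    have e1 : w.2 z = -(w.2 x₀) := by rw [hz_def, map_neg]
    have e2 : zs w.1 = -(ψ w.1) := rfl
    rw [e1, e2]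
    linarith
  have hqz : zs z ≤ -c := by
    have h := le_trans (hL3 (z, zs)) hFz
    exact EReal.coe_le_coe_iff.mp h
  have hzsz : zs z = ψ x₀ := by
    rw [hzs_def, hz_def]
    simp
  have hc2 : -(ψ x₀) ≤ c := by
    have h := hFY ψ (-x₀)
    have e : ψ (-x₀) = -(ψ x₀) := map_neg ψ x₀
    rw [e] at h
    linarith
  have hmem : zs ∈ S z := by
    refine hS.2 z zs fun y ys hy => ?_
    have h := hII (y, ys) hy
    rw [expand]
    have e1 : zs z = ψ x₀ := hzsz
    have e2 : zs y = -(ψ y) := rfl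
    have e3 : ys z = -(ys x₀) := by rw [hz_def, map_neg]
    rw [e1, e2, e3]
    simp only at h
    have hψx₀ : -c ≤ ψ x₀ := by linarith
    linarith
  refine ⟨z, zs, hmem, fun y => ?_⟩
  have e : (-zs : Dd X) = ψ := by rw [hzs_def, neg_neg]
  rw [e, map_sub]
  have h := hIII y
  have hcψz : c ≤ ψ z := by
    rw [hz_def, map_neg]
    rw [hzsz] at hqz
    linarith
  have : gR z = gR (-x₀) := by rw [hz_def]
  linarith [hIII y, hcψz]


section Transfer


variable {g : X → EReal}

lemma coe_gR (hgreal : ∀ x, g x ≠ ⊤ ∧ g x ≠ ⊥) (x : X) :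
    g x = (((g x).toReal : ℝ) : EReal) :=
  (EReal.coe_toReal (hgreal x).1 (hgreal x).2).symm

lemma gR_convexOn (hgc : EConvexOn g) (hgreal : ∀ x, g x ≠ ⊤ ∧ g x ≠ ⊥) :
    ConvexOn ℝ Set.univ fun x => (g x).toReal := by
  refine ⟨convex_univ, fun x _ y _ a b ha hb hab => ?_⟩
  have h := hgc x y a b ha hb hab
  rw [coe_gR hgreal x, coe_gR hgreal y, coe_gR hgreal (a • x + b • y)] at h
  rw [← EReal.coe_mul, ← EReal.coe_mul, ← EReal.coe_add, EReal.coe_le_coe_iff] at h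
  simpa [smul_eq_mul] using h

lemma gR_lsc (hgl : LowerSemicontinuous g) (hgreal : ∀ x, g x ≠ ⊤ ∧ g x ≠ ⊥) :
    LowerSemicontinuous fun x => (g x).toReal := by
  intro x y hy
  have h1 : ((y : ℝ) : EReal) < g x := by
    rw [coe_gR hgreal x]
    exact_mod_cast hy
  filter_upwards [hgl x _ h1] with x' hx'
  rw [coe_gR hgreal x'] at hx'
  exact_mod_cast hx'

lemma closed_sublevel {f : X → ℝ} (hf : LowerSemicontinuous f) (c : ℝ) :
    IsClosed {x | f x ≤ c} := by
  rw [← isOpen_compl_iff, isOpen_iff_mem_nhds]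
  intro x hx
  simp only [mem_compl_iff, mem_setOf_eq, not_le] at hx
  filter_upwards [hf x c hx] with y hy
  simp only [mem_compl_iff, mem_setOf_eq, not_le]
  exact hy

lemma conj_bound (hgreal : ∀ x, g x ≠ ⊤ ∧ g x ≠ ⊥)
    (hgconjreal : ∀ xs : Dd X, conj1 g xs ≠ ⊤ ∧ conj1 g xs ≠ ⊥)
    (v : Dd X) (w : X) : v w - (g w).toReal ≤ (conj1 g v).toReal := by
  have h : ((v w : ℝ) : EReal) - g w ≤ conj1 g v :=
    le_iSup (fun x : X => ((v x : ℝ) : EReal) - g x) w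
  rw [coe_gR hgreal w, ← EReal.coe_sub,
    (EReal.coe_toReal (hgconjreal v).1 (hgconjreal v).2).symm] at h
  exact_mod_cast h


end Transfer

end SurjAux

open SurjAux Set Filter

/-- if `g` and `g*` are everywhere real-valued (with `g` proper convex lsc),
then `S(p + ·) + ∂g(·)` is surjective for every `p`. -/

theorem surjective_translate_add_subdiff [CompleteSpace X] (hX : Reflexive' X)
    (S : X → Set (Dd X)) (hS : IsMaxMonotone S)
    (g : X → EReal) (hgc : EConvexOn g) (hgl : LowerSemicontinuous g)
    (hgreal : ∀ x, g x ≠ ⊤ ∧ g x ≠ ⊥)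
    (hgconjreal : ∀ xs : Dd X, conj1 g xs ≠ ⊤ ∧ conj1 g xs ≠ ⊥) :
    ∀ (p : X) (ps : Dd X), ∃ x : X, ∃ s ∈ S (p + x), ∃ t ∈ esubdiff g x, s + t = ps := by
  intro p ps
  set gR : X → ℝ := fun x => (g x).toReal with hgR_def
  have hgRconv : ConvexOn ℝ Set.univ gR := gR_convexOn hgc hgreal
  have hgRlsc : LowerSemicontinuous gR := gR_lsc hgl hgreal
  -- the translated and tilted function
  set g₁ : X → ℝ := fun x => gR (x - p) - ps (x - p) with hg₁_def
  have hg₁conv : ConvexOn ℝ Set.univ g₁ := by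
    refine ⟨convex_univ, fun x _ y _ a b ha hb hab => ?_⟩
    have hsplit : a • x + b • y - p = a • (x - p) + b • (y - p) := by
      have hp : a • p + b • p = p := by rw [← add_smul, hab, one_smul]
      have h' : a • (x - p) + b • (y - p) = a • x + b • y - (a • p + b • p) := by
        rw [smul_sub, smul_sub]; abel
      rw [h', hp]
    have h := hgRconv.2 (mem_univ (x - p)) (mem_univ (y - p)) ha hb hab
    show gR (a • x + b • y - p) - ps (a • x + b • y - p) ≤
      a • (gR (x - p) - ps (x - p)) + b • (gR (y - p) - ps (y - p))
    rw [hsplit]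
    simp only [smul_eq_mul] at h ⊢
    rw [map_add, map_smul, map_smul]
    simp only [smul_eq_mul]
    linarith
  have hg₁lsc : LowerSemicontinuous g₁ := by
    have h1 : LowerSemicontinuous fun x : X => gR (x - p) := fun x y hy =>
      ((continuous_id.sub continuous_const).tendsto x).eventually (hgRlsc (x - p) y hy)
    have h2 : LowerSemicontinuous fun x : X => -(ps (x - p)) :=
      (((ps.continuous.comp (continuous_id.sub continuous_const)).neg)).lowerSemicontinuous
    have h3 := h1.add h2
    show LowerSemicontinuous fun x : X => gR (x - p) - ps (x - p)
    simpa only [sub_eq_add_neg] using h3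
  have hg₁cl : ∀ c : ℝ, IsClosed {x | g₁ x ≤ c} := closed_sublevel hg₁lsc
  have hg₁bd : ∀ u : Dd X, BddAbove (Set.range fun x => u x - g₁ x) := by
    intro u
    refine ⟨(conj1 g (u + ps)).toReal + u p, ?_⟩
    rintro r ⟨x, rfl⟩
    have hb := conj_bound hgreal hgconjreal (u + ps) (x - p)
    have e : (u + ps) (x - p) = u x - u p + ps (x - p) := by
      rw [ContinuousLinearMap.add_apply, map_sub]
    rw [e] at hb
    simp only [hg₁_def]
    linarith
  obtain ⟨z, zs, hmem, hineq⟩ := key hX S hS g₁ hg₁conv hg₁cl hg₁bd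
  refine ⟨z - p, zs, by rwa [add_sub_cancel], ps - zs, ?_, by abel⟩
  refine ⟨(hgreal (z - p)).1, (hgreal (z - p)).2, fun y => ?_⟩
  rw [coe_gR hgreal (z - p), coe_gR hgreal y, ← EReal.coe_add, EReal.coe_le_coe_iff]
  have h := hineq (y + p)
  have e1 : y + p - z = y - (z - p) := by abel
  rw [e1] at h
  simp only [hg₁_def] at h
  have e2 : z - p - p = z - p - p := rfl
  -- h : gR (z - p) - ps (z - p) + (-zs) (y - (z - p)) ≤ gR (y + p - p) - ps (y + p - p)
  have e3 : y + p - p = y := by abel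
  rw [e3] at h
  have e4 : (ps - zs) (y - (z - p)) = ps (y - (z - p)) + (-zs) (y - (z - p)) := by
    rw [ContinuousLinearMap.sub_apply, ContinuousLinearMap.neg_apply]
    ring
  have e5 : ps (y - (z - p)) = ps y - ps (z - p) := by rw [map_sub]
  rw [e4, e5]
  linarith
end
end

section
/- Let X be a reflexive Banach space and f, g : X → ℝ ∪ {+∞} proper convex lower semicontinuous functions. If dom f ∩ dom g ≠ ∅, dom f* ∩ (−dom g*) ≠ ∅, the function f □ ĝ (where ĝ(x) = g(−x)) is lower semicontinuous at 0 and exact at 0, and the function f* □ g* is lower semicontinuous at 0 and exact at 0, then 0 ∈ R(∂f + ∂g), i.e., there exists x ∈ X with 0 ∈ ∂f(x) + ∂g(x). -/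
noncomputable section

open scoped Topology Pointwise

variable {X : Type*} [NormedAddCommGroup X] [NormedSpace ℝ X]

section Helpers

open EReal

lemma ereal_le_coe_of_forall_pos {d : EReal} {s : ℝ}
    (h : ∀ ε : ℝ, 0 < ε → d ≤ ((s + ε : ℝ) : EReal)) : d ≤ (s : EReal) := by
  by_contra hlt
  push_neg at hlt
  obtain ⟨y, hy1, hy2⟩ := EReal.exists_between_coe_real hlt
  have hys : s < y := EReal.coe_lt_coe_iff.1 hy1
  have := h (y - s) (by linarith)
  rw [show s + (y - s) = y by ring] at this
  exact absurd hy2 (not_lt.2 this)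

lemma ereal_coe_sub_le_of {a c : ℝ} {d : EReal} (h : (a : EReal) - d ≤ (c : EReal)) :
    ((a - c : ℝ) : EReal) ≤ d := by
  induction d using EReal.rec with
  | bot =>
      rw [EReal.coe_sub_bot] at h
      exact absurd h (by simp)
  | coe b =>
      rw [← EReal.coe_sub, EReal.coe_le_coe_iff] at h
      rw [EReal.coe_le_coe_iff]; linarith
  | top => exact le_top

lemma ereal_key2 {a m γ : ℝ} {d : EReal} (h : ((m : ℝ) : EReal) ≤ d + (γ : EReal)) :
    (a : EReal) - d ≤ ((a - m + γ : ℝ) : EReal) := by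
  induction d using EReal.rec with
  | bot =>
      exfalso
      rw [show (⊥ : EReal) + (γ : EReal) = ⊥ by simp] at h
      exact absurd h (by simp)
  | coe b =>
      rw [← EReal.coe_add, EReal.coe_le_coe_iff] at h
      rw [← EReal.coe_sub, EReal.coe_le_coe_iff]; linarith
  | top =>
      rw [show (a : EReal) - ⊤ = ⊥ by rfl]
      exact bot_le

lemma conj1_ne_bot (f : X → EReal) (hfb : ∀ x, f x ≠ ⊥) (x0 : X) (hx0 : f x0 ≠ ⊤)
    (xs : Dd X) : conj1 f xs ≠ ⊥ := by
  have h1 : ((xs x0 : ℝ) : EReal) - f x0 ≤ conj1 f xs :=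
    le_iSup (fun x => ((xs x : ℝ) : EReal) - f x) x0
  intro h
  rw [h, le_bot_iff] at h1
  have hv := EReal.coe_toReal hx0 (hfb x0)
  rw [← hv, ← EReal.coe_sub] at h1
  exact EReal.coe_ne_bot _ h1

lemma fy_minorant (f : X → EReal) (xs : Dd X) (c : ℝ) (hc : conj1 f xs ≤ (c : EReal)) (x : X) :
    ((xs x - c : ℝ) : EReal) ≤ f x :=
  ereal_coe_sub_le_of ((le_iSup (fun x => ((xs x : ℝ) : EReal) - f x) x).trans hc)

lemma infConv_epi_convex (f g1 : X → EReal) (hf : EConvexOn f) (hg : EConvexOn g1)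
    (hf' : ∀ x, f x ≠ ⊥) (hg' : ∀ x, g1 x ≠ ⊥) :
    Convex ℝ {p : X × ℝ | infConv f g1 p.1 ≤ (p.2 : EReal)} := by
  rintro ⟨x, t⟩ hx ⟨y, s⟩ hy a b ha hb hab
  simp only [Set.mem_setOf_eq] at hx hy
  show infConv f g1 (a • x + b • y) ≤ ((a • t + b • s : ℝ) : EReal)
  rw [smul_eq_mul, smul_eq_mul]
  apply ereal_le_coe_of_forall_pos
  intro ε hε
  have hx' : infConv f g1 x < ((t + ε : ℝ) : EReal) :=
    hx.trans_lt (EReal.coe_lt_coe_iff.2 (by linarith))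
  have hy' : infConv f g1 y < ((s + ε : ℝ) : EReal) :=
    hy.trans_lt (EReal.coe_lt_coe_iff.2 (by linarith))
  obtain ⟨u, hu⟩ := iInf_lt_iff.1 hx'
  obtain ⟨v, hv⟩ := iInf_lt_iff.1 hy'
  have hfu : f (x - u) ≠ ⊤ := by
    intro htop
    rw [htop, EReal.top_add_of_ne_bot (hg' u)] at hu
    exact absurd hu (by simp)
  have hgu : g1 u ≠ ⊤ := by
    intro htop
    rw [htop, EReal.add_top_of_ne_bot (hf' _)] at hu
    exact absurd hu (by simp)
  have hfv : f (y - v) ≠ ⊤ := by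
    intro htop
    rw [htop, EReal.top_add_of_ne_bot (hg' v)] at hv
    exact absurd hv (by simp)
  have hgv : g1 v ≠ ⊤ := by
    intro htop
    rw [htop, EReal.add_top_of_ne_bot (hf' _)] at hv
    exact absurd hv (by simp)
  set fp := (f (x - u)).toReal with hfp
  set gp := (g1 u).toReal with hgp
  set fq := (f (y - v)).toReal with hfq
  set gq := (g1 v).toReal with hgq
  have efp : f (x - u) = (fp : EReal) := (EReal.coe_toReal hfu (hf' _)).symm
  have egp : g1 u = (gp : EReal) := (EReal.coe_toReal hgu (hg' _)).symm
  have efq : f (y - v) = (fq : EReal) := (EReal.coe_toReal hfv (hf' _)).symm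
  have egq : g1 v = (gq : EReal) := (EReal.coe_toReal hgv (hg' _)).symm
  rw [efp, egp, ← EReal.coe_add, EReal.coe_lt_coe_iff] at hu
  rw [efq, egq, ← EReal.coe_add, EReal.coe_lt_coe_iff] at hv
  have step1 : infConv f g1 (a • x + b • y) ≤
      f (a • x + b • y - (a • u + b • v)) + g1 (a • u + b • v) :=
    iInf_le _ (a • u + b • v)
  have hpt : a • x + b • y - (a • u + b • v) = a • (x - u) + b • (y - v) := by
    rw [smul_sub, smul_sub]; abel
  have step2 : f (a • (x - u) + b • (y - v)) ≤
      (a : EReal) * f (x - u) + (b : EReal) * f (y - v) := hf _ _ a b ha hb hab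
  have step3 : g1 (a • u + b • v) ≤ (a : EReal) * g1 u + (b : EReal) * g1 v :=
    hg _ _ a b ha hb hab
  calc infConv f g1 (a • x + b • y)
      ≤ f (a • (x - u) + b • (y - v)) + g1 (a • u + b • v) := by rw [← hpt]; exact step1
    _ ≤ ((a : EReal) * f (x - u) + (b : EReal) * f (y - v)) +
        ((a : EReal) * g1 u + (b : EReal) * g1 v) := add_le_add step2 step3
    _ = ((a * fp + b * fq + (a * gp + b * gq) : ℝ) : EReal) := by
        rw [efp, efq, egp, egq, ← EReal.coe_mul, ← EReal.coe_mul, ← EReal.coe_mul,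
          ← EReal.coe_mul, ← EReal.coe_add, ← EReal.coe_add, ← EReal.coe_add]
    _ ≤ ((a * t + b * s + ε : ℝ) : EReal) := by
        rw [EReal.coe_le_coe_iff]
        nlinarith [mul_le_mul_of_nonneg_left hu.le ha, mul_le_mul_of_nonneg_left hv.le hb]

lemma exists_minorant {h : X → EReal}
    (hepi : Convex ℝ {p : X × ℝ | h p.1 ≤ (p.2 : EReal)})
    (l : Dd X) (cl : ℝ) (hl : ∀ x, ((l x - cl : ℝ) : EReal) ≤ h x)
    (hlsc : LowerSemicontinuousAt h 0) (x0 : X) (t0 : ℝ) (hx0 : h x0 ≤ (t0 : EReal))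
    (r : ℝ) (hr : (r : EReal) < h 0) :
    ∃ xs : Dd X, ∀ x, ((xs x + r : ℝ) : EReal) ≤ h x := by
  obtain ⟨r', hr1, hr2⟩ := EReal.exists_between_coe_real hr
  have hr1' : r < r' := EReal.coe_lt_coe_iff.1 hr1
  set E : Set (X × ℝ) := {p : X × ℝ | h p.1 ≤ (p.2 : EReal)} with hE
  have hnotin : ((0 : X), r) ∉ closure E := by
    intro hmem
    have hev : ∀ᶠ x in 𝓝 (0 : X), (r' : EReal) < h x := hlsc _ hr2
    obtain ⟨U, hU, hUsub⟩ := hev.exists_mem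
    have hV : U ×ˢ Set.Iio r' ∈ 𝓝 (((0 : X), r)) := prod_mem_nhds hU (Iio_mem_nhds hr1')
    obtain ⟨p, hp1, hp2⟩ := mem_closure_iff_nhds.1 hmem _ hV
    have h1 := hUsub p.1 hp1.1
    have h2 : h p.1 ≤ (p.2 : EReal) := hp2
    have h3 : ((p.2 : ℝ) : EReal) < (r' : EReal) := EReal.coe_lt_coe_iff.2 hp1.2
    exact absurd (h2.trans_lt h3) (not_lt.2 h1.le)
  obtain ⟨φ, u, hu1, hu2⟩ :=
    geometric_hahn_banach_point_closed hepi.closure isClosed_closure hnotin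
  set xφ : Dd X := φ.comp (ContinuousLinearMap.inl ℝ X ℝ) with hxφ
  set c : ℝ := φ (0, 1) with hc
  have hφ : ∀ x : X, ∀ t : ℝ, φ (x, t) = xφ x + t * c := by
    intro x t
    have hdec : (x, t) = ((x, 0) : X × ℝ) + t • (((0 : X), (1 : ℝ))) := by
      simp [Prod.ext_iff]
    rw [hdec, map_add, map_smul]
    simp [hxφ, hc, smul_eq_mul]
  have hkey : ∀ x : X, ∀ t : ℝ, h x ≤ (t : EReal) → u < xφ x + t * c := by
    intro x t hxt
    have hmem : (x, t) ∈ closure E := subset_closure hxt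
    have := hu2 _ hmem
    rwa [hφ] at this
  have hc0 : 0 ≤ c := by
    by_contra hcneg
    push_neg at hcneg
    set t := max t0 ((u - xφ x0) / c) with ht
    have h1 : h x0 ≤ (t : EReal) :=
      hx0.trans (EReal.coe_le_coe_iff.2 (le_max_left _ _))
    have h2 := hkey x0 t h1
    have h3 : (u - xφ x0) / c ≤ t := le_max_right _ _
    rw [div_le_iff_of_neg hcneg] at h3
    linarith
  have hur : r * c < u := by
    have h1 := hu1
    rw [hφ 0 r, map_zero] at h1
    linarith
  rcases hc0.lt_or_eq with hcpos | hczero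
  · refine ⟨(-(c⁻¹)) • xφ, fun x => ?_⟩
    by_cases hx : h x = ⊤
    · rw [hx]; exact le_top
    have hxb : h x ≠ ⊥ := fun hb => EReal.coe_ne_bot _ (le_bot_iff.1 (hb ▸ hl x))
    have hxr := EReal.coe_toReal hx hxb
    set t := (h x).toReal with htdef
    have h2 := hkey x t (le_of_eq hxr.symm)
    rw [← hxr, EReal.coe_le_coe_iff]
    have hval : ((-(c⁻¹)) • xφ) x = -(c⁻¹) * xφ x := rfl
    rw [hval]
    have h5 : (r * c - xφ x) / c < t := (div_lt_iff₀ hcpos).2 (by linarith)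
    have h6 : (r * c - xφ x) / c = r - c⁻¹ * xφ x := by field_simp
    linarith [h5, h6.symm.trans_lt h5]
  · have hu0 : 0 < u := by rw [← hczero] at hur; linarith
    set lam := max 0 ((r + cl) / u) with hlam
    have hlam0 : 0 ≤ lam := le_max_left _ _
    have hlamu : r + cl ≤ lam * u := by
      have := le_max_right 0 ((r + cl) / u)
      rw [div_le_iff₀ hu0] at this
      calc r + cl ≤ ((r + cl) / u) * u := by rw [div_mul_cancel₀]; exact hu0.ne'
        _ ≤ lam * u := mul_le_mul_of_nonneg_right (le_max_right _ _) hu0.le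
    refine ⟨l - lam • xφ, fun x => ?_⟩
    by_cases hx : h x = ⊤
    · rw [hx]; exact le_top
    have hxb : h x ≠ ⊥ := fun hb => EReal.coe_ne_bot _ (le_bot_iff.1 (hb ▸ hl x))
    have hxr := EReal.coe_toReal hx hxb
    set t := (h x).toReal with htdef
    have h2 := hkey x t (le_of_eq hxr.symm)
    rw [← hczero, mul_zero, add_zero] at h2
    have h4 : l x - cl ≤ t := by
      have := hl x
      rw [← hxr, EReal.coe_le_coe_iff] at this
      exact this
    rw [← hxr, EReal.coe_le_coe_iff]
    have hval : (l - lam • xφ) x = l x - lam * xφ x := rfl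
    rw [hval]
    nlinarith [mul_le_mul_of_nonneg_left h2.le hlam0]

end Helpers

/-- a closedness-type condition ensuring `0 ∈ R(∂f + ∂g)`. -/
theorem zero_mem_range_subdiff_sum [CompleteSpace X] (hX : Reflexive' X)
    (f g : X → EReal)
    (hfc : EConvexOn f) (hgc : EConvexOn g)
    (hfl : LowerSemicontinuous f) (hgl : LowerSemicontinuous g)
    (hfproper : (∀ x, f x ≠ ⊥) ∧ ∃ x, f x ≠ ⊤)
    (hgproper : (∀ x, g x ≠ ⊥) ∧ ∃ x, g x ≠ ⊤)
    (hdom : ∃ x, f x ≠ ⊤ ∧ g x ≠ ⊤)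
    (hdomstar : ∃ xs : Dd X, conj1 f xs ≠ ⊤ ∧ conj1 g (-xs) ≠ ⊤)
    (hlsc1 : LowerSemicontinuousAt (infConv f (fun x => g (-x))) (0 : X))
    (hex1 : ExactAt f (fun x => g (-x)) (0 : X))
    (hlsc2 : LowerSemicontinuousAt (infConv (conj1 f) (conj1 g)) (0 : Dd X))
    (hex2 : ExactAt (conj1 f) (conj1 g) (0 : Dd X)) :
    ∃ x : X, ∃ s ∈ esubdiff f x, ∃ t ∈ esubdiff g x, s + t = 0 := by
  classical
  obtain ⟨hfb, xf, hxf⟩ := hfproper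
  obtain ⟨hgb, xg, hxg⟩ := hgproper
  set g1 : X → EReal := fun x => g (-x) with hg1
  have hg1b : ∀ x, g1 x ≠ ⊥ := fun x => hgb (-x)
  have hg1c : EConvexOn g1 := by
    intro x y a b ha hb hab
    have h0 := hgc (-x) (-y) a b ha hb hab
    have hpt : a • (-x) + b • (-y) = -(a • x + b • y) := by
      rw [smul_neg, smul_neg]; abel
    rw [hpt] at h0
    exact h0
  obtain ⟨xs0, hf0, hg0⟩ := hdomstar
  have hfsb : conj1 f xs0 ≠ ⊥ := conj1_ne_bot f hfb xf hxf xs0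
  have hgsb0 : conj1 g (-xs0) ≠ ⊥ := conj1_ne_bot g hgb xg hxg (-xs0)
  set cf := (conj1 f xs0).toReal with hcf
  set cg := (conj1 g (-xs0)).toReal with hcg
  have ecf : conj1 f xs0 = (cf : EReal) := (EReal.coe_toReal hf0 hfsb).symm
  have ecg : conj1 g (-xs0) = (cg : EReal) := (EReal.coe_toReal hg0 hgsb0).symm
  have hfm : ∀ z, ((xs0 z - cf : ℝ) : EReal) ≤ f z :=
    fy_minorant f xs0 cf (le_of_eq ecf)
  have hgm : ∀ w, (((-xs0) w - cg : ℝ) : EReal) ≤ g w :=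
    fy_minorant g (-xs0) cg (le_of_eq ecg)
  set h : X → EReal := infConv f g1 with hh
  have hmin : ∀ y, ((xs0 y - (cf + cg) : ℝ) : EReal) ≤ h y := by
    intro y
    apply le_iInf
    intro u
    have h1 := hfm (y - u)
    have h2 := hgm (-u)
    have h3 : ((xs0 (y - u) - cf : ℝ) : EReal) + (((-xs0) (-u) - cg : ℝ) : EReal) ≤
        f (y - u) + g1 u := add_le_add h1 h2
    rw [← EReal.coe_add] at h3
    have h4 : xs0 y - (cf + cg) = (xs0 (y - u) - cf) + ((-xs0) (-u) - cg) := by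
      simp only [map_sub, ContinuousLinearMap.neg_apply, map_neg]
      ring
    rw [h4]
    exact h3
  -- finiteness of α := (f □ ĝ)(0)
  obtain ⟨xd, hfd, hgd⟩ := hdom
  have hαtop : h 0 ≠ ⊤ := by
    have h1 : h 0 ≤ f (0 - (-xd)) + g1 (-xd) := iInf_le _ (-xd)
    rw [zero_sub, neg_neg] at h1
    have h2 : g1 (-xd) = g xd := by rw [hg1]; simp
    rw [h2] at h1
    exact (h1.trans_lt (EReal.add_lt_top hfd hgd)).ne
  have hαbot : h 0 ≠ ⊥ := fun hb => EReal.coe_ne_bot _ (le_bot_iff.1 (hb ▸ hmin 0))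
  set α := (h 0).toReal with hα
  have eα : h 0 = (α : EReal) := (EReal.coe_toReal hαtop hαbot).symm
  -- exactness point of f □ ĝ
  obtain ⟨u1, he1⟩ := hex1
  set x₀ := -u1 with hx₀
  have he1' : (α : EReal) = f x₀ + g x₀ := by
    rw [← eα, hh]
    have h9 : g1 u1 = g x₀ := rfl
    rw [he1, zero_sub, h9]
  have hfx₀t : f x₀ ≠ ⊤ := by
    intro ht
    rw [ht, EReal.top_add_of_ne_bot (hgb x₀)] at he1'
    exact EReal.coe_ne_top α he1'
  have hgx₀t : g x₀ ≠ ⊤ := by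
    intro ht
    rw [ht, EReal.add_top_of_ne_bot (hfb x₀)] at he1'
    exact EReal.coe_ne_top α he1'
  set F1 := (f x₀).toReal with hF1
  set G1 := (g x₀).toReal with hG1
  have eF1 : f x₀ = (F1 : EReal) := (EReal.coe_toReal hfx₀t (hfb x₀)).symm
  have eG1 : g x₀ = (G1 : EReal) := (EReal.coe_toReal hgx₀t (hgb x₀)).symm
  have hFG1 : F1 + G1 = α := by
    rw [eF1, eG1, ← EReal.coe_add] at he1'
    exact (EReal.coe_eq_coe_iff.1 he1').symm
  -- exactness point of f* □ g*
  obtain ⟨u2, he2⟩ := hex2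
  set s : Dd X := -u2 with hs
  have he2' : infConv (conj1 f) (conj1 g) 0 = conj1 f s + conj1 g (-s) := by
    rw [he2, zero_sub, hs, neg_neg]
  have hβtop : infConv (conj1 f) (conj1 g) 0 ≠ ⊤ := by
    have h1 : infConv (conj1 f) (conj1 g) 0 ≤ conj1 f (0 - (-xs0)) + conj1 g (-xs0) :=
      iInf_le _ (-xs0)
    rw [zero_sub, neg_neg, ecf, ecg, ← EReal.coe_add] at h1
    exact (h1.trans_lt (EReal.coe_lt_top _)).ne
  have hfsb2 : conj1 f s ≠ ⊥ := conj1_ne_bot f hfb xf hxf s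
  have hgsb2 : conj1 g (-s) ≠ ⊥ := conj1_ne_bot g hgb xg hxg (-s)
  have hfst : conj1 f s ≠ ⊤ := by
    intro ht
    rw [he2', ht, EReal.top_add_of_ne_bot hgsb2] at hβtop
    exact hβtop rfl
  have hgst : conj1 g (-s) ≠ ⊤ := by
    intro ht
    rw [he2', ht, EReal.add_top_of_ne_bot hfsb2] at hβtop
    exact hβtop rfl
  set F2 := (conj1 f s).toReal with hF2
  set G2 := (conj1 g (-s)).toReal with hG2
  have eF2 : conj1 f s = (F2 : EReal) := (EReal.coe_toReal hfst hfsb2).symm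
  have eG2 : conj1 g (-s) = (G2 : EReal) := (EReal.coe_toReal hgst hgsb2).symm
  -- Fenchel–Young inequalities at the exactness points
  have hFY1 : s x₀ ≤ F1 + F2 := by
    have h1 : ((s x₀ : ℝ) : EReal) - f x₀ ≤ conj1 f s :=
      le_iSup (fun x => ((s x : ℝ) : EReal) - f x) x₀
    rw [eF1, eF2, ← EReal.coe_sub, EReal.coe_le_coe_iff] at h1
    linarith
  have hFY2 : -(s x₀) ≤ G1 + G2 := by
    have h1 : (((-s) x₀ : ℝ) : EReal) - g x₀ ≤ conj1 g (-s) :=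
      le_iSup (fun x => (((-s) x : ℝ) : EReal) - g x) x₀
    rw [eG1, eG2, ← EReal.coe_sub, EReal.coe_le_coe_iff] at h1
    have h2 : (-s) x₀ = -(s x₀) := rfl
    rw [h2] at h1
    linarith
  -- the key duality inequality : F2 + G2 ≤ -α
  have hkey : ∀ r : ℝ, r < α → F2 + G2 ≤ -r := by
    intro r hrα
    have hr : (r : EReal) < h 0 := by rw [eα]; exact EReal.coe_lt_coe_iff.2 hrα
    have hepi := infConv_epi_convex f g1 hfc hg1c hfb hg1b
    obtain ⟨xs, hxs⟩ := exists_minorant hepi xs0 (cf + cg) hmin hlsc1 0 α (le_of_eq eα) r hr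
    have hcross : ∀ z w : X, ((xs z - xs w + r : ℝ) : EReal) ≤ f z + g w := by
      intro z w
      have h1 : h (z - w) ≤ f ((z - w) - (-w)) + g1 (-w) := iInf_le _ (-w)
      have h2 : (z - w) - (-w) = z := by abel
      have h2' : g1 (-w) = g w := by rw [hg1]; simp
      rw [h2, h2'] at h1
      have h3 := (hxs (z - w)).trans h1
      rw [show xs (z - w) + r = xs z - xs w + r by rw [map_sub]] at h3
      exact h3
    -- conj1 f xs and conj1 g (-xs) are finite
    set γ := (g xg).toReal with hγ
    have eγ : g xg = (γ : EReal) := (EReal.coe_toReal hxg (hgb xg)).symm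
    set δ := (f xf).toReal with hδ
    have eδ : f xf = (δ : EReal) := (EReal.coe_toReal hxf (hfb xf)).symm
    have hconjf_le : conj1 f xs ≤ ((xs xg - r + γ : ℝ) : EReal) := by
      apply iSup_le
      intro z
      have hcz : ((xs z - xs xg + r : ℝ) : EReal) ≤ f z + (γ : EReal) := by
        rw [← eγ]; exact hcross z xg
      have := ereal_key2 (a := xs z) hcz
      rwa [show xs z - (xs z - xs xg + r) + γ = xs xg - r + γ by ring] at this
    have hconjg_le : conj1 g (-xs) ≤ ((-(xs xf) - r + δ : ℝ) : EReal) := by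
      apply iSup_le
      intro w
      have hcw : ((xs xf - xs w + r : ℝ) : EReal) ≤ g w + (δ : EReal) := by
        rw [← eδ, add_comm (g w) (f xf)]; exact hcross xf w
      have h1 := ereal_key2 (a := -(xs w)) hcw
      have h2 : (((-xs) w : ℝ) : EReal) = ((-(xs w) : ℝ) : EReal) := by
        norm_num
      rw [show -(xs w) - (xs xf - xs w + r) + δ = -(xs xf) - r + δ by ring] at h1
      rw [h2]
      exact h1
    have hcfxb : conj1 f xs ≠ ⊥ := conj1_ne_bot f hfb xf hxf xs
    have hcgxb : conj1 g (-xs) ≠ ⊥ := conj1_ne_bot g hgb xg hxg (-xs)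
    have hcfxt : conj1 f xs ≠ ⊤ := (hconjf_le.trans_lt (EReal.coe_lt_top _)).ne
    have hcgxt : conj1 g (-xs) ≠ ⊤ := (hconjg_le.trans_lt (EReal.coe_lt_top _)).ne
    set p := (conj1 f xs).toReal with hp
    set q := (conj1 g (-xs)).toReal with hq
    have ep : conj1 f xs = (p : EReal) := (EReal.coe_toReal hcfxt hcfxb).symm
    have eq' : conj1 g (-xs) = (q : EReal) := (EReal.coe_toReal hcgxt hcgxb).symm
    have hpq : ∀ ε : ℝ, 0 < ε → p + q ≤ -r + 2 * ε := by
      intro ε hε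
      have h1 : ((p - ε : ℝ) : EReal) < conj1 f xs := by
        rw [ep]; exact EReal.coe_lt_coe_iff.2 (by linarith)
      obtain ⟨z, hz⟩ := lt_iSup_iff.1 h1
      have hfzt : f z ≠ ⊤ := by
        intro ht
        rw [ht] at hz
        rw [show ((xs z : ℝ) : EReal) - ⊤ = ⊥ by rfl] at hz
        exact absurd hz (by simp)
      have efz : f z = ((f z).toReal : EReal) := (EReal.coe_toReal hfzt (hfb z)).symm
      rw [efz, ← EReal.coe_sub, EReal.coe_lt_coe_iff] at hz
      have h2 : ((q - ε : ℝ) : EReal) < conj1 g (-xs) := by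
        rw [eq']; exact EReal.coe_lt_coe_iff.2 (by linarith)
      obtain ⟨w, hw⟩ := lt_iSup_iff.1 h2
      have hgwt : g w ≠ ⊤ := by
        intro ht
        rw [ht] at hw
        rw [show (((-xs) w : ℝ) : EReal) - ⊤ = ⊥ by rfl] at hw
        exact absurd hw (by simp)
      have egw : g w = ((g w).toReal : EReal) := (EReal.coe_toReal hgwt (hgb w)).symm
      rw [egw, ← EReal.coe_sub, EReal.coe_lt_coe_iff] at hw
      have h3 := hcross z w
      rw [efz, egw, ← EReal.coe_add, EReal.coe_le_coe_iff] at h3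
      have h4 : (-xs) w = -(xs w) := rfl
      rw [h4] at hw
      linarith
    have hpqr : p + q ≤ -r := by
      by_contra hcon
      push_neg at hcon
      have := hpq ((p + q + r) / 4) (by linarith)
      linarith
    have h5 : infConv (conj1 f) (conj1 g) 0 ≤ conj1 f (0 - (-xs)) + conj1 g (-xs) :=
      iInf_le _ (-xs)
    rw [zero_sub, neg_neg, ep, eq', ← EReal.coe_add, he2', eF2, eG2, ← EReal.coe_add,
      EReal.coe_le_coe_iff] at h5
    linarith
  have hβα : F2 + G2 ≤ -(F1 + G1) := by
    by_contra hcon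
    push_neg at hcon
    obtain ⟨r, hr1, hr2⟩ := exists_between (show -(F2 + G2) < α by rw [← hFG1]; linarith)
    have := hkey r (by linarith)
    linarith
  have hEq1 : F1 + F2 = s x₀ := by linarith
  have hEq2 : G1 + G2 = -(s x₀) := by linarith
  refine ⟨x₀, s, ⟨hfx₀t, hfb x₀, ?_⟩, -s, ⟨hgx₀t, hgb x₀, ?_⟩, by abel⟩
  · intro y
    have hm : ((s y - F2 : ℝ) : EReal) ≤ f y := fy_minorant f s F2 (le_of_eq eF2) y
    rw [eF1]
    have h1 : s (y - x₀) = s y - s x₀ := map_sub s y x₀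
    rw [h1, ← EReal.coe_add]
    rw [show F1 + (s y - s x₀) = s y - F2 by linarith]
    exact hm
  · intro y
    have hm : (((-s) y - G2 : ℝ) : EReal) ≤ g y := fy_minorant g (-s) G2 (le_of_eq eG2) y
    rw [eG1]
    have h1 : (-s) (y - x₀) = -(s y) + s x₀ := by
      rw [map_sub]
      show -(s y) - -(s x₀) = _
      ring
    rw [h1, ← EReal.coe_add]
    have h2 : (-s) y = -(s y) := rfl
    rw [h2] at hm
    rw [show G1 + (-(s y) + s x₀) = -(s y) - G2 by linarith]
    exact hm
end
end
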